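/- arXiv:1711.09399 — 5 statements merged into one kernel-verified Lean document; each statement's English description precedes it below -/
import Mathlib

section
/- Let p be a prime, m ≥ 1, and n a positive integer dividing p − 1. Let r ∈ (ℤ/p^mℤ)^× have multiplicative order exactly n, and let G = ℤ/p^mℤ ⋊_r ℤ/nℤ. Then for every integer a, the number of elements g ∈ G with g^a = 1 equals gcd(a, p^m) + p^m·(gcd(a, n) − 1). -/
open Multiplicative

private lemma card_mul_eq_zero_zmod (M k : ℕ) (hM : 0 < M) :
    Nat.card {x : ZMod M // (k : ZMod M) * x = 0} = Nat.gcd k M := by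
  haveI : NeZero M := ⟨hM.ne'⟩
  set f : ZMod M →+ ZMod M := AddMonoidHom.mulLeft (k : ZMod M) with hf
  have hker : Nat.card {x : ZMod M // (k : ZMod M) * x = 0} = Nat.card f.ker :=
    Nat.card_congr (Equiv.subtypeEquivRight fun x => by
      simp [hf, AddMonoidHom.mem_ker])
  have hrange : f.range = AddSubgroup.zmultiples ((k : ZMod M)) := by
    ext y
    simp only [AddMonoidHom.mem_range, AddSubgroup.mem_zmultiples_iff]
    constructor
    · rintro ⟨x, rfl⟩
      exact ⟨(x.val : ℤ), by
        simp [hf, zsmul_eq_mul, ZMod.natCast_val, ZMod.cast_id, mul_comm]⟩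
    · rintro ⟨z, rfl⟩
      exact ⟨(z : ZMod M), by simp [hf, zsmul_eq_mul, mul_comm]⟩
  have hcr : Nat.card f.range = M / Nat.gcd M k := by
    rw [hrange, Nat.card_zmultiples, ZMod.addOrderOf_coe _ hM.ne']
  have h1 : Nat.card (ZMod M) = Nat.card (ZMod M ⧸ f.ker) * Nat.card f.ker :=
    AddSubgroup.card_eq_card_quotient_mul_card_addSubgroup f.ker
  have h2 : Nat.card (ZMod M ⧸ f.ker) = Nat.card f.range :=
    Nat.card_congr (QuotientAddGroup.quotientKerEquivRange f).toEquiv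
  rw [hker]
  have hMcard : Nat.card (ZMod M) = M := Nat.card_zmod M
  have hgdvd : Nat.gcd M k ∣ M := Nat.gcd_dvd_left M k
  have hgpos : 0 < Nat.gcd M k := Nat.gcd_pos_of_pos_left k hM
  have hdivpos : 0 < M / Nat.gcd M k := Nat.div_pos (Nat.le_of_dvd hM hgdvd) hgpos
  have hM1 : M = (M / Nat.gcd M k) * Nat.card f.ker := by
    conv_lhs => rw [← hMcard]
    rw [h1, h2, hcr]
  have hMg : Nat.gcd M k * (M / Nat.gcd M k) = M := Nat.mul_div_cancel' hgdvd
  have key : Nat.card f.ker * (M / Nat.gcd M k) = Nat.gcd M k * (M / Nat.gcd M k) := by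
    rw [hMg, mul_comm, ← hM1]
  rw [Nat.eq_of_mul_eq_mul_right hdivpos key, Nat.gcd_comm]

/-- Let `p` be a prime, `m ≥ 1`, `n` a positive divisor of `p - 1`,
`r ∈ (ℤ/p^mℤ)ˣ` of multiplicative order exactly `n`, and `G = ℤ/p^mℤ ⋊_r ℤ/nℤ`.
Then for every integer `a`, the number of `g ∈ G` with `g^a = 1` equals
`gcd(a, p^m) + p^m · (gcd(a, n) - 1)`. -/
theorem card_solutions_pow_eq_one_semidirect_zmod
    (p m n : ℕ) (hp : p.Prime) (hm : 1 ≤ m) (hn : 0 < n) (hdvd : n ∣ p - 1)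
    (r : (ZMod (p ^ m))ˣ) (hr : orderOf r = n)
    (ψ : Multiplicative (ZMod n) →* MulAut (Multiplicative (ZMod (p ^ m))))
    (hψ : ∀ x : ZMod (p ^ m),
      ψ (ofAdd (1 : ZMod n)) (ofAdd x) = ofAdd ((r : ZMod (p ^ m)) * x))
    (a : ℤ) :
    Nat.card {g : Multiplicative (ZMod (p ^ m)) ⋊[ψ] Multiplicative (ZMod n) // g ^ a = 1}
      = Int.gcd a (p ^ m) + p ^ m * (Int.gcd a n - 1) := by
  classical
  have hM : 0 < p ^ m := pow_pos hp.pos m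
  haveI : NeZero (p ^ m) := ⟨hM.ne'⟩
  haveI : NeZero n := ⟨hn.ne'⟩
  set k := a.natAbs with hk
  -- reduce integer exponent to natural exponent
  have hzk : ∀ g : Multiplicative (ZMod (p ^ m)) ⋊[ψ] Multiplicative (ZMod n),
      g ^ a = 1 ↔ g ^ k = 1 := by
    intro g
    rcases Int.natAbs_eq a with h | h
    · conv_lhs => rw [h]
      rw [zpow_natCast]
    · conv_lhs => rw [h]
      rw [zpow_neg, inv_eq_one, zpow_natCast]
  -- action formula
  have hact : ∀ (y : ZMod n) (x : ZMod (p ^ m)),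
      ψ (ofAdd y) (ofAdd x) = ofAdd ((r : ZMod (p ^ m)) ^ y.val * x) := by
    have key : ∀ (j : ℕ) (x : ZMod (p ^ m)),
        ψ ((ofAdd (1 : ZMod n)) ^ j) (ofAdd x) = ofAdd ((r : ZMod (p ^ m)) ^ j * x) := by
      intro j
      induction j with
      | zero => intro x; simp
      | succ j ih =>
        intro x
        rw [pow_succ, map_mul, MulAut.mul_apply, hψ, ih]
        congr 1
        ring
    intro y x
    have h1 : (ofAdd (1 : ZMod n)) ^ y.val = ofAdd y := by
      rw [← ofAdd_nsmul]
      congr 1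
      simp [nsmul_eq_mul, ZMod.natCast_val, ZMod.cast_id]
    rw [← h1, key]
  -- power formula
  have hpow : ∀ (j : ℕ) (x : ZMod (p ^ m)) (y : ZMod n),
      (⟨ofAdd x, ofAdd y⟩ : Multiplicative (ZMod (p ^ m)) ⋊[ψ] Multiplicative (ZMod n)) ^ j
        = ⟨ofAdd ((∑ i ∈ Finset.range j, ((r : ZMod (p ^ m)) ^ y.val) ^ i) * x),
            ofAdd ((j : ZMod n) * y)⟩ := by
    intro j x y
    induction j with
    | zero =>
      rw [pow_zero]
      ext <;> simp
    | succ j ih =>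
      rw [pow_succ', ih]
      ext
      · rw [SemidirectProduct.mul_left]
        show (ofAdd x * ψ (ofAdd y) (ofAdd (_ * x))) = _
        rw [hact, ← ofAdd_add]
        congr 1
        rw [geom_sum_succ]
        ring
        rfl
      · rw [SemidirectProduct.mul_right]
        show (ofAdd y * ofAdd ((j : ZMod n) * y)) = _
        rw [← ofAdd_add]
        congr 1
        push_cast
        ring
        rfl
  -- characterisation
  have hchar : ∀ (x : ZMod (p ^ m)) (y : ZMod n),
      ((⟨ofAdd x, ofAdd y⟩ : Multiplicative (ZMod (p ^ m)) ⋊[ψ] Multiplicative (ZMod n)) ^ a = 1) ↔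
        ((∑ i ∈ Finset.range k, ((r : ZMod (p ^ m)) ^ y.val) ^ i) * x = 0 ∧ (k : ZMod n) * y = 0) := by
    intro x y
    rw [hzk, hpow]
    constructor
    · intro h
      have h1 := congrArg SemidirectProduct.left h
      have h2 := congrArg SemidirectProduct.right h
      simp only [SemidirectProduct.one_left, SemidirectProduct.one_right] at h1 h2
      exact ⟨by simpa using h1, by simpa using h2⟩
    · rintro ⟨h1, h2⟩
      ext
      · simpa using h1
      · simpa using h2
  -- equivalence with a sigma type
  have e : {g : Multiplicative (ZMod (p ^ m)) ⋊[ψ] Multiplicative (ZMod n) // g ^ a = 1} ≃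
      Σ y : {y : ZMod n // (k : ZMod n) * y = 0},
        {x : ZMod (p ^ m) // (∑ i ∈ Finset.range k, ((r : ZMod (p ^ m)) ^ (y.1).val) ^ i) * x = 0} :=
    { toFun := fun g => ⟨⟨g.1.right.toAdd, ((hchar g.1.left.toAdd g.1.right.toAdd).1 g.2).2⟩,
        ⟨g.1.left.toAdd, ((hchar g.1.left.toAdd g.1.right.toAdd).1 g.2).1⟩⟩,
      invFun := fun s => ⟨⟨ofAdd s.2.1, ofAdd s.1.1⟩, (hchar s.2.1 s.1.1).2 ⟨s.2.2, s.1.2⟩⟩,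
      left_inv := fun g => rfl,
      right_inv := fun s => rfl }
  rw [Nat.card_congr e, Nat.card_eq_fintype_card, Fintype.card_sigma]
  -- fibre cardinalities
  have hfiber : ∀ y : {y : ZMod n // (k : ZMod n) * y = 0},
      Fintype.card {x : ZMod (p ^ m) //
          (∑ i ∈ Finset.range k, ((r : ZMod (p ^ m)) ^ (y.1).val) ^ i) * x = 0}
        = if y.1 = 0 then Nat.gcd k (p ^ m) else p ^ m := by
    intro y
    by_cases hy : y.1 = 0
    · rw [if_pos hy, ← Nat.card_eq_fintype_card]
      have hSk : (∑ i ∈ Finset.range k, ((r : ZMod (p ^ m)) ^ (y.1).val) ^ i) = (k : ZMod (p ^ m)) := by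
        rw [hy]
        simp
      rw [Nat.card_congr (Equiv.subtypeEquivRight (fun x => by rw [hSk]))]
      exact card_mul_eq_zero_zmod (p ^ m) k hM
    · rw [if_neg hy, ← Nat.card_eq_fintype_card]
      -- show the geometric sum vanishes
      set u : (ZMod (p ^ m))ˣ := r ^ (y.1).val with hu
      have hu' : (u : ZMod (p ^ m)) = (r : ZMod (p ^ m)) ^ (y.1).val := by
        rw [hu, Units.val_pow_eq_pow_val]
      have hvne : (y.1).val ≠ 0 := fun h0 => hy ((ZMod.val_eq_zero _).1 h0)
      have hvlt : (y.1).val < n := ZMod.val_lt _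
      have hndvd : n ∣ (y.1).val * k := by
        have h2 := y.2
        have h3 : (((y.1).val * k : ℕ) : ZMod n) = 0 := by
          push_cast
          rw [ZMod.natCast_val, ZMod.cast_id, mul_comm]
          exact h2
        exact (ZMod.natCast_eq_zero_iff _ _).1 h3
      have huk : u ^ k = 1 := by
        rw [hu, ← pow_mul]
        exact orderOf_dvd_iff_pow_eq_one.1 (by rw [hr]; exact hndvd)
      have hu1 : u ≠ 1 := by
        intro h
        have hdv : orderOf r ∣ (y.1).val := orderOf_dvd_iff_pow_eq_one.2 h
        rw [hr] at hdv
        have := Nat.le_of_dvd (Nat.pos_of_ne_zero hvne) hdv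
        omega
      have hpdvd : p ∣ p ^ m := dvd_pow_self p (by omega : m ≠ 0)
      set Φ := ZMod.unitsMap hpdvd with hΦ
      have hcard_ker : Nat.card Φ.ker = p ^ (m - 1) := by
        have hsurj : Function.Surjective Φ := ZMod.unitsMap_surjective hpdvd
        have h1 : Nat.card (ZMod (p ^ m))ˣ = Nat.card ((ZMod (p ^ m))ˣ ⧸ Φ.ker) * Nat.card Φ.ker :=
          Subgroup.card_eq_card_quotient_mul_card_subgroup Φ.ker
        have h2 : Nat.card ((ZMod (p ^ m))ˣ ⧸ Φ.ker) = Nat.card (ZMod p)ˣ :=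
          Nat.card_congr (QuotientGroup.quotientKerEquivOfSurjective Φ hsurj).toEquiv
        have h3 : Nat.card (ZMod (p ^ m))ˣ = p ^ (m - 1) * (p - 1) := by
          rw [Nat.card_eq_fintype_card, ZMod.card_units_eq_totient,
            Nat.totient_prime_pow hp (by omega : 0 < m)]
        have h4 : Nat.card (ZMod p)ˣ = p - 1 := by
          haveI : Fact p.Prime := ⟨hp⟩
          rw [Nat.card_eq_fintype_card, ZMod.card_units]
        have hp1 : 0 < p - 1 := by have := hp.two_le; omega
        rw [h3, h2, h4] at h1
        have h5 : p ^ (m - 1) * (p - 1) = Nat.card Φ.ker * (p - 1) := by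
          rw [h1]; ring
        exact (Nat.eq_of_mul_eq_mul_right hp1 h5).symm
      have himg : (ZMod.castHom hpdvd (ZMod p)) ((u : ZMod (p ^ m))) ≠ 1 := by
        intro h
        have hmem : u ∈ Φ.ker := by
          rw [hΦ, MonoidHom.mem_ker]
          exact Units.ext (by simpa [ZMod.unitsMap_def] using h)
        have hdvd1 : orderOf u ∣ p ^ (m - 1) := by
          have h6 : orderOf (⟨u, hmem⟩ : Φ.ker) ∣ Nat.card Φ.ker := orderOf_dvd_natCard _
          rwa [Subgroup.orderOf_mk, hcard_ker] at h6
        have hdvd2 : orderOf u ∣ p - 1 := by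
          have h7 : orderOf u ∣ orderOf r := by
            rw [hu]
            exact orderOf_pow_dvd _
          rw [hr] at h7
          exact h7.trans hdvd
        have hcop : Nat.Coprime (p ^ (m - 1)) (p - 1) := by
          have h8 : Nat.Coprime p (p - 1) :=
            (Nat.coprime_self_sub_right hp.one_le).2 (Nat.coprime_one_right p)
          exact h8.pow_left _
        have h10 : orderOf u ∣ Nat.gcd (p ^ (m - 1)) (p - 1) := Nat.dvd_gcd hdvd1 hdvd2
        rw [Nat.Coprime.gcd_eq_one hcop] at h10
        exact hu1 (orderOf_eq_one_iff.1 (Nat.dvd_one.1 h10))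
      have hSy : (∑ i ∈ Finset.range k, ((r : ZMod (p ^ m)) ^ (y.1).val) ^ i) = 0 := by
        have hunit : IsUnit ((r : ZMod (p ^ m)) ^ (y.1).val - 1) := by
          set w := (r : ZMod (p ^ m)) ^ (y.1).val - 1 with hw
          have hne : (ZMod.castHom hpdvd (ZMod p)) w ≠ 0 := by
            rw [hw, map_sub, map_one, sub_ne_zero]
            intro hcontra
            exact himg (by rw [hu']; exact hcontra)
          have hnd : ¬ p ∣ w.val := by
            intro hd
            apply hne
            have h11 : ((w.val : ℕ) : ZMod p) = 0 :=
              (ZMod.natCast_eq_zero_iff _ _).2 hd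
            rw [ZMod.natCast_val] at h11
            rw [ZMod.castHom_apply]
            exact h11
          have hcop2 : Nat.Coprime w.val (p ^ m) :=
            Nat.Coprime.pow_right m (((Nat.Prime.coprime_iff_not_dvd hp).2 hnd).symm)
          have h12 := (ZMod.isUnit_iff_coprime w.val (p ^ m)).2 hcop2
          rwa [ZMod.natCast_val, ZMod.cast_id] at h12
        have hgeo : (∑ i ∈ Finset.range k, ((r : ZMod (p ^ m)) ^ (y.1).val) ^ i) *
            ((r : ZMod (p ^ m)) ^ (y.1).val - 1) = 0 := by
          rw [geom_sum_mul]
          have h13 : ((r : ZMod (p ^ m)) ^ (y.1).val) ^ k = 1 := by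
            rw [← hu', ← Units.val_pow_eq_pow_val, huk, Units.val_one]
          rw [h13, sub_self]
        exact (IsUnit.mul_left_eq_zero hunit).1 hgeo
      rw [Nat.card_congr (Equiv.subtypeUnivEquiv (fun x => by rw [hSy, zero_mul]))]
      exact Nat.card_zmod (p ^ m)
  rw [Finset.sum_congr rfl (fun y _ => hfiber y)]
  have hIcard : Fintype.card {y : ZMod n // (k : ZMod n) * y = 0} = Nat.gcd k n := by
    rw [← Nat.card_eq_fintype_card]
    exact card_mul_eq_zero_zmod n k hn
  have hy0mem : (⟨0, mul_zero _⟩ : {y : ZMod n // (k : ZMod n) * y = 0}) ∈ Finset.univ :=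
    Finset.mem_univ _
  rw [← Finset.add_sum_erase _ _ hy0mem, if_pos rfl]
  have herase : ∑ y ∈ Finset.univ.erase (⟨0, mul_zero _⟩ : {y : ZMod n // (k : ZMod n) * y = 0}),
      (if y.1 = 0 then Nat.gcd k (p ^ m) else p ^ m) = (Nat.gcd k n - 1) * p ^ m := by
    rw [Finset.sum_congr rfl (fun y hy => if_neg (fun h0 =>
      (Finset.mem_erase.1 hy).1 (Subtype.ext h0)))]
    rw [Finset.sum_const, Finset.card_erase_of_mem hy0mem, Finset.card_univ, hIcard,
      smul_eq_mul]
  rw [herase]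
  have e1 : Int.gcd a ((p : ℤ) ^ m) = Nat.gcd k (p ^ m) := by
    simp [Int.gcd, hk, Int.natAbs_pow]
  have e2 : Int.gcd a (n : ℤ) = Nat.gcd k n := by
    simp [Int.gcd, hk]
  rw [e1, e2, Nat.mul_comm]
end

section
/- Let p be a prime, m ≥ 1, and n a positive integer dividing p − 1. Let r ∈ (ℤ/p^mℤ)^× have multiplicative order exactly n, let G = ℤ/p^mℤ ⋊_r ℤ/nℤ, and for an integer t let χ_t : G → ℂ^× be the group homomorphism sending (x, y) to ζ_n^{t·y}. Then for all integers a and b, the sum Σ_{g ∈ G, g^a = 1} χ_t(g^{−b}) equals gcd(a, p^m) − p^m + p^m·gcd(a, n) if gcd(a,n) divides t·b, and equals gcd(a, p^m) − p^m otherwise. -/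
open Multiplicative Finset Complex


open Multiplicative Finset

-- counting lemma
lemma zmod_filter_eq_image (M A : ℕ) [NeZero M] :
    Finset.filter (fun x : ZMod M => (A : ZMod M) * x = 0) Finset.univ
      = (Finset.range (A.gcd M)).image (fun k => ((M / A.gcd M * k : ℕ) : ZMod M)) := by
  have hM : M ≠ 0 := NeZero.ne M
  set d := A.gcd M with hdd
  have hd : 0 < d := Nat.gcd_pos_of_pos_right _ (Nat.pos_of_ne_zero hM)
  have hdM : d ∣ M := Nat.gcd_dvd_right _ _
  have hdA : d ∣ A := Nat.gcd_dvd_left _ _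
  have hMe : M / d * d = M := Nat.div_mul_cancel hdM
  ext x
  simp only [Finset.mem_filter, Finset.mem_univ, true_and, Finset.mem_image, Finset.mem_range]
  constructor
  · intro hx
    have hx' : ((A * x.val : ℕ) : ZMod M) = 0 := by
      push_cast
      rw [ZMod.natCast_zmod_val]
      exact hx
    have hdvd : M ∣ A * x.val := (ZMod.natCast_eq_zero_iff _ _).mp hx'
    have h1 : M / d ∣ (A / d) * x.val := by
      have : d * (M / d) ∣ d * ((A / d) * x.val) := by
        rw [Nat.mul_div_cancel' hdM, ← mul_assoc, Nat.mul_div_cancel' hdA]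
        exact hdvd
      exact (Nat.mul_dvd_mul_iff_left hd).mp this
    have hcop : Nat.Coprime (A / d) (M / d) := Nat.coprime_div_gcd_div_gcd hd
    have h2 : M / d ∣ x.val := (Nat.Coprime.dvd_of_dvd_mul_left hcop.symm h1)
    obtain ⟨k, hk⟩ := h2
    refine ⟨k, ?_, ?_⟩
    · have hxv : x.val < M := ZMod.val_lt x
      rw [hk] at hxv
      by_contra hkd
      push_neg at hkd
      have : M / d * d ≤ M / d * k := Nat.mul_le_mul_left _ hkd
      rw [hMe] at this
      omega
    · rw [← hk, ZMod.natCast_zmod_val]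
  · rintro ⟨k, hk, rfl⟩
    have : ((A * (M / d * k) : ℕ) : ZMod M) = 0 := by
      rw [ZMod.natCast_eq_zero_iff]
      refine ⟨A / d * k, ?_⟩
      calc A * (M / d * k) = (d * (A / d)) * (M / d * k) := by rw [Nat.mul_div_cancel' hdA]
      _ = (M / d * d) * (A / d * k) := by ring
      _ = M * (A / d * k) := by rw [hMe]
    push_cast at this ⊢
    exact this

lemma zmod_image_injOn (M A : ℕ) [NeZero M] :
    Set.InjOn (fun k => ((M / A.gcd M * k : ℕ) : ZMod M)) (Finset.range (A.gcd M)) := by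
  have hM : M ≠ 0 := NeZero.ne M
  set d := A.gcd M with hdd
  have hd : 0 < d := Nat.gcd_pos_of_pos_right _ (Nat.pos_of_ne_zero hM)
  have hdM : d ∣ M := Nat.gcd_dvd_right _ _
  have hMe : M / d * d = M := Nat.div_mul_cancel hdM
  intro k1 h1 k2 h2 he
  simp only [Finset.coe_range, Set.mem_Iio] at h1 h2
  have hlt : ∀ k, k < d → M / d * k < M := by
    intro k hkd
    have hMd : 0 < M / d := Nat.div_pos (Nat.le_of_dvd (Nat.pos_of_ne_zero hM) hdM) hd
    calc M / d * k < M / d * d := (mul_lt_mul_iff_right₀ hMd).mpr hkd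
    _ = M := hMe
  have := congrArg ZMod.val he
  simp only at this
  rw [ZMod.val_cast_of_lt (hlt _ h1), ZMod.val_cast_of_lt (hlt _ h2)] at this
  have hMd : 0 < M / d := Nat.div_pos (Nat.le_of_dvd (Nat.pos_of_ne_zero hM) hdM) hd
  exact Nat.eq_of_mul_eq_mul_left hMd this

lemma zmod_sum_solutions {β : Type*} [AddCommMonoid β] (M A : ℕ) [NeZero M] (f : ZMod M → β) :
    ∑ x ∈ Finset.filter (fun x : ZMod M => (A : ZMod M) * x = 0) Finset.univ, f x
      = ∑ k ∈ Finset.range (A.gcd M), f ((M / A.gcd M * k : ℕ)) := by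
  rw [zmod_filter_eq_image, Finset.sum_image]
  intro k1 h1 k2 h2
  exact zmod_image_injOn M A (by simpa using h1) (by simpa using h2)

open Complex

lemma exp_congr_int (n : ℕ) (hn : 0 < n) (c z w : ℤ) (h : (n : ℤ) ∣ z - w) :
    Complex.exp (2 * Real.pi * Complex.I * (c * z) / n)
      = Complex.exp (2 * Real.pi * Complex.I * (c * w) / n) := by
  obtain ⟨k, hk⟩ := h
  have hz : (z : ℂ) = w + n * k := by
    have : (z : ℤ) = w + n * k := by omega
    exact_mod_cast congrArg (Int.cast : ℤ → ℂ) this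
  have hn' : (n : ℂ) ≠ 0 := Nat.cast_ne_zero.mpr hn.ne'
  have : 2 * (Real.pi:ℂ) * Complex.I * (c * z) / n
      = 2 * (Real.pi:ℂ) * Complex.I * (c * w) / n + ((c * k : ℤ) : ℂ) * (2 * Real.pi * Complex.I) := by
    push_cast
    rw [hz]; field_simp
  rw [this, Complex.exp_add, Complex.exp_int_mul_two_pi_mul_I, mul_one]

lemma sum_exp_geom (d : ℕ) (hd : 0 < d) (c : ℤ) :
    ∑ k ∈ Finset.range d, Complex.exp (2 * Real.pi * Complex.I * (c * k) / d)
      = if (d : ℤ) ∣ c then (d : ℂ) else 0 := by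
  have hd' : (d : ℂ) ≠ 0 := Nat.cast_ne_zero.mpr hd.ne'
  set z := Complex.exp (2 * Real.pi * Complex.I * c / d) with hz
  have hzk : ∀ k : ℕ, Complex.exp (2 * Real.pi * Complex.I * (c * k) / d) = z ^ k := by
    intro k
    rw [hz, ← Complex.exp_nat_mul]
    congr 1
    field_simp
  simp only [hzk]
  by_cases h : (d : ℤ) ∣ c
  · obtain ⟨e, he⟩ := id h
    have hz1 : z = 1 := by
      rw [hz]
      have : 2 * (Real.pi:ℂ) * Complex.I * c / d = (e : ℤ) * (2 * Real.pi * Complex.I) := by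
        have hc : (c : ℂ) = d * e := by exact_mod_cast congrArg (Int.cast : ℤ → ℂ) he
        rw [hc]; field_simp
      rw [this, Complex.exp_int_mul_two_pi_mul_I]
    simp [hz1, h]
  · have hz1 : z ≠ 1 := by
      intro hz1
      rw [hz, Complex.exp_eq_one_iff] at hz1
      obtain ⟨k, hk⟩ := hz1
      apply h
      refine ⟨k, ?_⟩
      have h2 : (2 * (Real.pi:ℂ) * Complex.I) ≠ 0 := by
        simp [Real.pi_ne_zero, Complex.I_ne_zero]
      have : (c : ℂ) = d * k := by
        field_simp at hk
        have := hk
        -- 2*π*I*c = k*(2*π*I)*d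
        calc (c:ℂ) = (2 * Real.pi * Complex.I * c) / (2 * Real.pi * Complex.I) := by
              field_simp
        _ = ((k : ℂ) * (2 * Real.pi * Complex.I) * d) / (2 * Real.pi * Complex.I) := by rw [this]; ring
        _ = d * k := by field_simp
      exact_mod_cast this
    have hgeom := geom_sum_mul z d
    have hzd : z ^ d = 1 := by
      rw [hz, ← Complex.exp_nat_mul]
      have : (d:ℂ) * (2 * Real.pi * Complex.I * c / d) = (c : ℤ) * (2 * Real.pi * Complex.I) := by
        field_simp
      rw [this, Complex.exp_int_mul_two_pi_mul_I]
    rw [hzd, sub_self] at hgeom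
    have := mul_eq_zero.mp hgeom
    rcases this with h1 | h2
    · simp [h, h1]
    · exact absurd (sub_eq_zero.mp h2) hz1

lemma sub_one_isUnit_zmod (p m n : ℕ) (hp : p.Prime) (hm : 1 ≤ m) (hn : 0 < n)
    (hdvd : n ∣ p - 1) (s : (ZMod (p ^ m))ˣ) (hs : s ^ n = 1) (hs1 : s ≠ 1) :
    IsUnit ((s : ZMod (p ^ m)) - 1) := by
  haveI : Fact p.Prime := ⟨hp⟩
  haveI : NeZero (p ^ m) := ⟨pow_ne_zero m hp.pos.ne'⟩
  have hp1 : 0 < p - 1 := by have := hp.two_le; omega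
  by_contra hunit
  -- p divides the val of s - 1
  set u : ZMod (p ^ m) := (s : ZMod (p ^ m)) - 1 with hu
  have hpdvd : p ∣ u.val := by
    by_contra hpd
    apply hunit
    have hcop : Nat.Coprime u.val (p ^ m) :=
      Nat.Coprime.pow_right m (Nat.coprime_comm.mp ((hp.coprime_iff_not_dvd).mpr hpd))
    have := (ZMod.isUnit_iff_coprime u.val (p ^ m)).mpr hcop
    rwa [ZMod.natCast_zmod_val] at this
  -- hence s maps to 1 under the units map to ZMod p
  have hpm : p ∣ p ^ m := dvd_pow_self p (by omega)
  have hker : ZMod.unitsMap hpm s = 1 := by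
    apply Units.ext
    rw [ZMod.unitsMap_def]
    simp only [Units.coe_map, MonoidHom.coe_coe, Units.val_one]
    have h0 : (ZMod.castHom hpm (ZMod p)) u = 0 := by
      rw [← ZMod.natCast_zmod_val u, map_natCast]
      exact (ZMod.natCast_eq_zero_iff _ _).mpr hpdvd
    have : (ZMod.castHom hpm (ZMod p)) u
        = (ZMod.castHom hpm (ZMod p)) (s : ZMod (p ^ m)) - 1 := by
      rw [hu, map_sub, map_one]
    rw [this] at h0
    linear_combination h0
  -- cardinality of the kernel is p^(m-1)
  have hsurj : Function.Surjective (ZMod.unitsMap hpm) := ZMod.unitsMap_surjective hpm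
  have hcardq : Nat.card ((ZMod (p ^ m))ˣ ⧸ (ZMod.unitsMap hpm).ker) = Nat.card (ZMod p)ˣ := by
    have e1 := QuotientGroup.quotientKerEquivRange (ZMod.unitsMap hpm)
    have e2 : (ZMod.unitsMap hpm).range = ⊤ := MonoidHom.range_eq_top.mpr hsurj
    rw [Nat.card_congr e1.toEquiv, e2]
    exact Nat.card_congr Subgroup.topEquiv.toEquiv
  have hcardU : Nat.card (ZMod (p ^ m))ˣ = p ^ (m - 1) * (p - 1) := by
    rw [Nat.card_eq_fintype_card, ZMod.card_units_eq_totient, Nat.totient_prime_pow hp (by omega)]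
  have hcardu : Nat.card (ZMod p)ˣ = p - 1 := by
    rw [Nat.card_eq_fintype_card, ZMod.card_units_eq_totient, Nat.totient_prime hp]
  have hcardker : Nat.card (ZMod.unitsMap hpm).ker = p ^ (m - 1) := by
    have := Subgroup.card_eq_card_quotient_mul_card_subgroup (ZMod.unitsMap hpm).ker
    rw [hcardU, hcardq, hcardu] at this
    have h2 : (p - 1) * Nat.card (ZMod.unitsMap hpm).ker = (p - 1) * p ^ (m - 1) := by
      rw [mul_comm (p-1) (p ^ (m-1))]; linarith [this]
    exact (Nat.eq_of_mul_eq_mul_left hp1 h2)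
  -- order of s divides p^(m-1) and n, which are coprime
  have hmem : s ∈ (ZMod.unitsMap hpm).ker := hker
  have hdvd1 : orderOf s ∣ p ^ (m - 1) := hcardker ▸ Subgroup.orderOf_dvd_natCard _ hmem
  have hdvd2 : orderOf s ∣ n := orderOf_dvd_of_pow_eq_one hs
  have hpn : ¬ p ∣ n := by
    intro h
    have := Nat.le_of_dvd hp1 (h.trans hdvd)
    have := hp.two_le
    omega
  have hcop : Nat.Coprime (p ^ (m - 1)) n :=
    Nat.Coprime.pow_left _ ((hp.coprime_iff_not_dvd).mpr hpn)
  have : orderOf s ∣ 1 := by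
    have := Nat.dvd_gcd hdvd1 hdvd2
    rwa [Nat.Coprime.gcd_eq_one hcop] at this
  exact hs1 (orderOf_eq_one_iff.mp (Nat.dvd_one.mp this))

open Multiplicative

section
variable {N n : ℕ} [NeZero n] (r : (ZMod N)ˣ)
variable (ψ : Multiplicative (ZMod n) →* MulAut (Multiplicative (ZMod N)))
variable (hψ : ∀ x : ZMod N, ψ (ofAdd (1 : ZMod n)) (ofAdd x) = ofAdd ((r : ZMod N) * x))

include hψ

lemma psi_pow_apply (k : ℕ) (x : ZMod N) :
    ((ψ (ofAdd (1 : ZMod n))) ^ k) (ofAdd x) = ofAdd ((r : ZMod N) ^ k * x) := by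
  induction k generalizing x with
  | zero => simp
  | succ k ih =>
    rw [pow_succ, MulAut.mul_apply, hψ, ih]
    congr 1
    ring

lemma psi_apply (w : ZMod n) (x : ZMod N) :
    ψ (ofAdd w) (ofAdd x) = ofAdd ((r : ZMod N) ^ w.val * x) := by
  have h1 : (ofAdd w) = (ofAdd (1 : ZMod n)) ^ (w.val) := by
    rw [← ofAdd_nsmul]
    congr 1
    rw [nsmul_eq_mul, mul_one, ZMod.natCast_zmod_val]
  rw [h1, map_pow, psi_pow_apply r ψ hψ]

lemma pow_formula (hrn : (r : ZMod N) ^ n = 1) (x : ZMod N) (y : ZMod n) (k : ℕ) :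
    (⟨ofAdd x, ofAdd y⟩ : Multiplicative (ZMod N) ⋊[ψ] Multiplicative (ZMod n)) ^ k
      = ⟨ofAdd ((∑ j ∈ Finset.range k, (r : ZMod N) ^ (j * y.val)) * x),
          ofAdd ((k : ZMod n) * y)⟩ := by
  induction k with
  | zero =>
    simp only [pow_zero, Finset.range_zero, Finset.sum_empty, zero_mul, Nat.cast_zero]
    rfl
  | succ k ih =>
    rw [pow_succ, ih, SemidirectProduct.mul_def]
    congr 1
    · simp only
      rw [psi_apply r ψ hψ]
      have hval : (r : ZMod N) ^ (((k : ZMod n) * y).val) = (r : ZMod N) ^ (k * y.val) := by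
        have h1 : ((k : ZMod n) * y) = ((k * y.val : ℕ) : ZMod n) := by
          push_cast
          rw [ZMod.natCast_zmod_val]
        rw [h1, ZMod.val_natCast, ← pow_eq_pow_mod _ hrn]
      rw [hval, ← ofAdd_add]
      congr 1
      rw [Finset.sum_range_succ]
      ring
    · simp only
      rw [← ofAdd_add]
      congr 1
      push_cast
      ring
end


lemma sd_mk_eq_one_iff {N G : Type*} [Group N] [Group G] {φ : G →* MulAut N}
    (x : N) (y : G) : (⟨x, y⟩ : N ⋊[φ] G) = 1 ↔ x = 1 ∧ y = 1 := by
  constructor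
  · intro h
    exact ⟨congrArg SemidirectProduct.left h, congrArg SemidirectProduct.right h⟩
  · rintro ⟨rfl, rfl⟩; rfl

lemma S_eq_zero (p m n : ℕ) (hp : p.Prime) (hm : 1 ≤ m) (hn : 0 < n) (hdvd : n ∣ p - 1)
    (r : (ZMod (p ^ m))ˣ) (hr : orderOf r = n) (A v : ℕ) (hv0 : 0 < v) (hvn : v < n)
    (hAv : n ∣ A * v) :
    (∑ j ∈ Finset.range A, ((r : ZMod (p ^ m))) ^ (j * v)) = 0 := by
  have hsum : (∑ j ∈ Finset.range A, ((r : ZMod (p ^ m))) ^ (j * v))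
      = ∑ j ∈ Finset.range A, (((r : ZMod (p ^ m))) ^ v) ^ j := by
    apply Finset.sum_congr rfl
    intro j _
    rw [← pow_mul, mul_comm]
  have hrn : r ^ n = 1 := by rw [← hr]; exact pow_orderOf_eq_one r
  have hrn' : (r : ZMod (p ^ m)) ^ n = 1 := by
    have := congrArg (Units.val) hrn
    push_cast at this
    exact this
  have hzA : ((r : ZMod (p ^ m)) ^ v) ^ A = 1 := by
    obtain ⟨k, hk⟩ := hAv
    rw [← pow_mul, mul_comm v A, hk, pow_mul, hrn', one_pow]
  have hgeom := geom_sum_mul ((r : ZMod (p ^ m)) ^ v) A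
  rw [hzA, sub_self] at hgeom
  have hunit : IsUnit ((r : ZMod (p ^ m)) ^ v - 1) := by
    have h1 : ((r ^ v : (ZMod (p ^ m))ˣ) : ZMod (p ^ m)) = (r : ZMod (p ^ m)) ^ v := by
      push_cast; rfl
    rw [← h1]
    apply sub_one_isUnit_zmod p m n hp hm hn hdvd (r ^ v)
    · rw [← pow_mul, mul_comm, pow_mul, hrn, one_pow]
    · intro h
      have h2 : orderOf r ∣ v := orderOf_dvd_of_pow_eq_one h
      rw [hr] at h2
      have := Nat.le_of_dvd hv0 h2
      omega
  rw [hsum]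
  exact (IsUnit.mul_left_eq_zero hunit).mp hgeom

/-- Let `p` be a prime, `m ≥ 1`, `n` a positive divisor of `p - 1`,
`r ∈ (ℤ/p^mℤ)ˣ` of multiplicative order exactly `n`, `G = ℤ/p^mℤ ⋊_r ℤ/nℤ`, and for an
integer `t` let `χ_t : G → ℂˣ` be the homomorphism sending `(x, y)` to `ζ_n^{t·y}`.
Then for all integers `a, b`, the sum `Σ_{g ∈ G, g^a = 1} χ_t(g^{-b})` equals
`gcd(a,p^m) - p^m + p^m·gcd(a,n)` if `gcd(a,n) ∣ t·b`, and `gcd(a,p^m) - p^m`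
otherwise. -/
theorem character_sum_semidirect_zmod
    (p m n : ℕ) (hp : p.Prime) (hm : 1 ≤ m) (hn : 0 < n) (hdvd : n ∣ p - 1)
    (r : (ZMod (p ^ m))ˣ) (hr : orderOf r = n)
    (ψ : Multiplicative (ZMod n) →* MulAut (Multiplicative (ZMod (p ^ m))))
    (hψ : ∀ x : ZMod (p ^ m),
      ψ (ofAdd (1 : ZMod n)) (ofAdd x) = ofAdd ((r : ZMod (p ^ m)) * x))
    (t : ℤ)
    (χ : (Multiplicative (ZMod (p ^ m)) ⋊[ψ] Multiplicative (ZMod n)) →* ℂˣ)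
    (hχ : ∀ g : Multiplicative (ZMod (p ^ m)) ⋊[ψ] Multiplicative (ZMod n),
      (χ g : ℂ) = Complex.exp (2 * Real.pi * Complex.I * (t * ((toAdd g.right).val : ℤ)) / n))
    (a b : ℤ) :
    (∑ᶠ g ∈ {g : Multiplicative (ZMod (p ^ m)) ⋊[ψ] Multiplicative (ZMod n) | g ^ a = 1},
        (χ (g ^ (-b)) : ℂ))
      = if (Int.gcd a n : ℤ) ∣ t * b then
          (Int.gcd a (p ^ m) : ℂ) - (p : ℂ) ^ m + (p : ℂ) ^ m * (Int.gcd a n : ℂ)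
        else (Int.gcd a (p ^ m) : ℂ) - (p : ℂ) ^ m := by
  classical
  haveI : Fact p.Prime := ⟨hp⟩
  haveI : NeZero (p ^ m) := ⟨pow_ne_zero m hp.pos.ne'⟩
  haveI : NeZero n := ⟨hn.ne'⟩
  set G := Multiplicative (ZMod (p ^ m)) ⋊[ψ] Multiplicative (ZMod n) with hG
  let e : (ZMod (p ^ m)) × (ZMod n) ≃ G :=
    ⟨fun q => ⟨ofAdd q.1, ofAdd q.2⟩, fun g => (toAdd g.left, toAdd g.right),
     fun q => rfl, fun g => rfl⟩
  haveI : Fintype G := Fintype.ofEquiv _ e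
  set A := a.natAbs with hA
  set d := A.gcd n with hd
  set D := A.gcd (p ^ m) with hD
  have hdpos : 0 < d := Nat.gcd_pos_of_pos_right _ hn
  have hrn : (r : ZMod (p ^ m)) ^ n = 1 := by
    have h0 : r ^ n = 1 := by rw [← hr]; exact pow_orderOf_eq_one r
    have := congrArg (Units.val) h0
    push_cast at this
    exact this
  set T : ZMod n → ℂ := fun y =>
    Complex.exp (2 * Real.pi * Complex.I * (t * ((((-b : ℤ) : ZMod n) * y).val : ℤ)) / n)
    with hT
  -- membership condition
  have hcond : ∀ (x : ZMod (p ^ m)) (y : ZMod n),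
      ((⟨ofAdd x, ofAdd y⟩ : G) ^ a = 1)
        ↔ ((A : ZMod n) * y = 0
            ∧ (∑ j ∈ Finset.range A, (r : ZMod (p ^ m)) ^ (j * y.val)) * x = 0) := by
    intro x y
    have h1 : ((⟨ofAdd x, ofAdd y⟩ : G) ^ a = 1) ↔ ((⟨ofAdd x, ofAdd y⟩ : G) ^ A = 1) := by
      rw [← orderOf_dvd_iff_zpow_eq_one, ← orderOf_dvd_iff_pow_eq_one, hA, Int.natCast_dvd]
    rw [h1, pow_formula r ψ hψ hrn, sd_mk_eq_one_iff, ofAdd_eq_one, ofAdd_eq_one]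
    tauto
  -- the character term
  have hterm : ∀ (x : ZMod (p ^ m)) (y : ZMod n),
      (χ ((⟨ofAdd x, ofAdd y⟩ : G) ^ (-b)) : ℂ) = T y := by
    intro x y
    rw [hχ]
    have h1 : toAdd (((⟨ofAdd x, ofAdd y⟩ : G) ^ (-b)).right) = ((-b : ℤ) : ZMod n) * y := by
      have h0 : ((⟨ofAdd x, ofAdd y⟩ : G) ^ (-b)).right = (ofAdd y) ^ (-b) :=
        map_zpow (SemidirectProduct.rightHom (φ := ψ)) _ (-b)
      rw [h0, toAdd_zpow, toAdd_ofAdd, zsmul_eq_mul]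
    rw [h1]
  -- convert the finsum to a double sum
  have hfin : ({g : G | g ^ a = 1} : Set G).Finite := Set.toFinite _
  have h0 : (∑ᶠ g ∈ {g : G | g ^ a = 1}, (χ (g ^ (-b)) : ℂ))
      = ∑ g : G, (if g ^ a = 1 then (χ (g ^ (-b)) : ℂ) else 0) := by
    rw [finsum_mem_eq_finite_toFinset_sum _ hfin, Set.Finite.toFinset_setOf, Finset.sum_filter]
  have h1 : (∑ g : G, (if g ^ a = 1 then (χ (g ^ (-b)) : ℂ) else 0))
      = ∑ y : ZMod n, ∑ x : ZMod (p ^ m),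
          (if (e (x, y)) ^ a = 1 then (χ ((e (x, y)) ^ (-b)) : ℂ) else 0) := by
    rw [← Equiv.sum_comp e (fun g : G => if g ^ a = 1 then (χ (g ^ (-b)) : ℂ) else 0),
      Fintype.sum_prod_type, Finset.sum_comm]
  have h2 : ∀ (x : ZMod (p ^ m)) (y : ZMod n), e (x, y) = (⟨ofAdd x, ofAdd y⟩ : G) :=
    fun _ _ => rfl
  -- the inner sums
  have h3 : ∀ y : ZMod n,
      (∑ x : ZMod (p ^ m), if (e (x, y)) ^ a = 1 then (χ ((e (x, y)) ^ (-b)) : ℂ) else 0)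
        = if (A : ZMod n) * y = 0 then
            (if y = 0 then (D : ℂ) else ((p ^ m : ℕ) : ℂ)) * T y else 0 := by
    intro y
    by_cases h1y : (A : ZMod n) * y = 0
    · rw [if_pos h1y]
      have hx : ∀ x : ZMod (p ^ m),
          (if (e (x, y)) ^ a = 1 then (χ ((e (x, y)) ^ (-b)) : ℂ) else 0)
            = (if (∑ j ∈ Finset.range A, (r : ZMod (p ^ m)) ^ (j * y.val)) * x = 0
                then T y else 0) := by
        intro x
        rw [h2, hterm]
        apply if_congr _ rfl rfl
        rw [hcond]
        simp [h1y]
      rw [Finset.sum_congr rfl (fun x _ => hx x), Finset.sum_ite, Finset.sum_const,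
        Finset.sum_const_zero, add_zero]
      by_cases hy : y = 0
      · subst hy
        rw [if_pos rfl]
        have hS : ∀ x : ZMod (p ^ m),
            ((∑ j ∈ Finset.range A, (r : ZMod (p ^ m)) ^ (j * (0 : ZMod n).val)) * x = 0)
              = ((A : ZMod (p ^ m)) * x = 0) := by
          intro x
          congr 1
          simp [ZMod.val_zero]
        simp only [hS]
        rw [zmod_filter_eq_image (p ^ m) A,
          Finset.card_image_of_injOn (zmod_image_injOn (p ^ m) A), Finset.card_range]
        rw [nsmul_eq_mul, ← hD]
      · rw [if_neg hy]
        have hval0 : 0 < y.val := Nat.pos_of_ne_zero (fun h => hy ((ZMod.val_eq_zero y).mp h))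
        have hvaln : y.val < n := ZMod.val_lt y
        have hndvd : n ∣ A * y.val := by
          have hcast : ((A * y.val : ℕ) : ZMod n) = 0 := by
            push_cast
            rw [ZMod.natCast_zmod_val]
            exact h1y
          exact (ZMod.natCast_eq_zero_iff _ _).mp hcast
        have hS := S_eq_zero p m n hp hm hn hdvd r hr A y.val hval0 hvaln hndvd
        have hfilter : Finset.filter
            (fun x : ZMod (p ^ m) =>
              (∑ j ∈ Finset.range A, (r : ZMod (p ^ m)) ^ (j * y.val)) * x = 0)
            Finset.univ = Finset.univ := by
          apply Finset.filter_true_of_mem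
          intro x _
          rw [hS, zero_mul]
        rw [hfilter, Finset.card_univ, ZMod.card, nsmul_eq_mul]
    · rw [if_neg h1y]
      apply Finset.sum_eq_zero
      intro x _
      rw [h2, if_neg]
      rw [hcond]
      tauto
  -- split off the y = 0 correction
  have h4 : ∀ y : ZMod n,
      (if (A : ZMod n) * y = 0 then
          (if y = 0 then (D : ℂ) else ((p ^ m : ℕ) : ℂ)) * T y else 0)
        = (if (A : ZMod n) * y = 0 then ((p ^ m : ℕ) : ℂ) * T y else 0)
            + (if y = 0 then (D : ℂ) - ((p ^ m : ℕ) : ℂ) else 0) := by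
    intro y
    by_cases hy : y = 0
    · subst hy
      have hc : (A : ZMod n) * 0 = 0 := mul_zero _
      rw [if_pos hc, if_pos hc, if_pos rfl, if_pos rfl]
      have hT0 : T 0 = 1 := by
        rw [hT]
        simp
      rw [hT0]
      ring
    · rw [if_neg hy, if_neg hy, add_zero]
  -- character sum over the kernel subgroup of ZMod n
  have h5 : ∀ k : ℕ, T (((n / d * k : ℕ) : ZMod n))
      = Complex.exp (2 * Real.pi * Complex.I * (((-(t * b) : ℤ) : ℂ) * (k : ℂ)) / d) := by
    obtain ⟨q, hq⟩ := Nat.gcd_dvd_right A n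
    rw [← hd] at hq
    have hq' : n / d = q := by rw [hq]; exact Nat.mul_div_cancel_left q hdpos
    have hq0 : q ≠ 0 := by
      intro h
      rw [h, mul_zero] at hq
      omega
    intro k
    rw [hT]
    simp only [hq']
    set w : ZMod n := ((-b : ℤ) : ZMod n) * ((q * k : ℕ) : ZMod n) with hw
    have hcongr : (n : ℤ) ∣ ((w.val : ℤ) - (-b) * (q * k : ℕ)) := by
      have hb1 : (((w.val : ℤ)) : ZMod n) = (((-b) * (q * k : ℕ) : ℤ) : ZMod n) := by
        push_cast
        rw [ZMod.natCast_zmod_val, hw]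
        push_cast
        ring
      exact Int.ModEq.dvd (Int.ModEq.symm ((ZMod.intCast_eq_intCast_iff _ _ _).mp hb1))
    rw [exp_congr_int n hn t _ ((-b) * (q * k : ℕ)) hcongr]
    have hd0 : (d : ℂ) ≠ 0 := Nat.cast_ne_zero.mpr hdpos.ne'
    have hq0' : (q : ℂ) ≠ 0 := Nat.cast_ne_zero.mpr hq0
    have hnC : (n : ℂ) = (d : ℂ) * (q : ℂ) := by
      rw [hq]
      push_cast
      ring
    rw [hnC]
    congr 1
    push_cast
    field_simp
  -- assemble
  rw [h0, h1, Finset.sum_congr rfl (fun y _ => (h3 y).trans (h4 y)), Finset.sum_add_distrib,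
    Finset.sum_ite_eq' Finset.univ (0 : ZMod n) (fun _ => (D : ℂ) - ((p ^ m : ℕ) : ℂ)),
    if_pos (Finset.mem_univ _), ← Finset.sum_filter, ← Finset.mul_sum]
  rw [zmod_sum_solutions n A T, ← hd, Finset.sum_congr rfl (fun k _ => h5 k),
    sum_exp_geom d hdpos (-(t * b))]
  have hgcd1 : Int.gcd a (n : ℤ) = d := by
    rw [Int.gcd, hd, hA, Int.natAbs_natCast]
  have hgcd2 : Int.gcd a ((p : ℤ) ^ m) = D := by
    have hcast : ((p : ℤ) ^ m) = ((p ^ m : ℕ) : ℤ) := by push_cast; ring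
    rw [hcast, Int.gcd, hD, hA, Int.natAbs_natCast]
  have hdvd_iff : ((d : ℤ) ∣ -(t * b)) ↔ ((Int.gcd a (n : ℤ) : ℤ) ∣ t * b) := by
    rw [hgcd1, dvd_neg]
  by_cases hc : (Int.gcd a (n : ℤ) : ℤ) ∣ t * b
  · rw [if_pos hc, if_pos (hdvd_iff.mpr hc), hgcd2, hgcd1]
    push_cast
    ring
  · rw [if_neg hc, if_neg (fun h => hc (hdvd_iff.mp h)), hgcd2]
    push_cast
    ring
end

section
/- Let p be a prime, h ≥ 1, let F_{p^h} be the field with p^h elements, and let r ∈ F_{p^h}^× have multiplicative order n. Let G = F_{p^h} ⋊_r ℤ/nℤ be the semidirect product of the additive group of F_{p^h} by ℤ/nℤ, where the generator of ℤ/nℤ acts by multiplication by r. Then the number of conjugacy classes of G equals n + (p^h − 1)/n. -/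
open Multiplicative

/-- Let `p` be a prime, `h ≥ 1`, let `F` be the field with `p^h`
elements, and let `r ∈ Fˣ` have multiplicative order `n`.  Let `G = F ⋊_r ℤ/nℤ` be the
semidirect product of the additive group of `F` by `ℤ/nℤ`, where the generator of
`ℤ/nℤ` acts by multiplication by `r`.  Then the number of conjugacy classes of `G`
equals `n + (p^h - 1)/n`. -/
theorem conjClasses_card_semidirect_field
    (p h : ℕ) (hp : p.Prime) (hh : 1 ≤ h)
    (F : Type) [Field F] [Fintype F] (hF : Fintype.card F = p ^ h)
    (n : ℕ) (r : Fˣ) (hr : orderOf r = n)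
    (ψ : Multiplicative (ZMod n) →* MulAut (Multiplicative F))
    (hψ : ∀ x : F, ψ (ofAdd (1 : ZMod n)) (ofAdd x) = ofAdd ((r : F) * x)) :
    Nat.card (ConjClasses (Multiplicative F ⋊[ψ] Multiplicative (ZMod n)))
      = n + (p ^ h - 1) / n := by
  classical
  have npos : 0 < n := hr ▸ orderOf_pos r
  haveI : NeZero n := ⟨npos.ne'⟩
  set G := Multiplicative F ⋊[ψ] Multiplicative (ZMod n) with hG
  -- powers of r modulo n
  have hmod : ∀ k : ℕ, r ^ (k % n) = r ^ k := by
    intro k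
    have := pow_mod_orderOf r k
    rwa [hr] at this
  have hmodF : ∀ k : ℕ, (r : F) ^ (k % n) = (r : F) ^ k := by
    intro k; exact_mod_cast congrArg Units.val (hmod k)
  have hpowadd : ∀ u v : ZMod n, (r : F) ^ (u + v).val = (r : F) ^ u.val * (r : F) ^ v.val := by
    intro u v
    have : r ^ (u + v).val = r ^ u.val * r ^ v.val := by
      rw [ZMod.val_add, hmod, pow_add]
    exact_mod_cast congrArg Units.val this
  -- action of ψ on additive elements
  have hψnat : ∀ (k : ℕ) (x : F),
      ψ (ofAdd ((k : ZMod n))) (ofAdd x) = ofAdd ((r : F) ^ k * x) := by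
    intro k
    induction k with
    | zero => intro x; simp
    | succ k ih =>
      intro x
      have h1 : ((k + 1 : ℕ) : ZMod n) = (k : ZMod n) + 1 := by push_cast; ring
      have h2 : ofAdd ((k : ZMod n) + 1) = ofAdd ((k : ZMod n)) * ofAdd (1 : ZMod n) := rfl
      rw [h1, h2, map_mul]
      have h3 : (ψ (ofAdd ((k : ZMod n))) * ψ (ofAdd (1 : ZMod n))) (ofAdd x)
          = ψ (ofAdd ((k : ZMod n))) (ψ (ofAdd (1 : ZMod n)) (ofAdd x)) := rfl
      rw [h3, hψ, ih]
      congr 1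
      ring
  have hψval : ∀ (y : Multiplicative (ZMod n)) (x : Multiplicative F),
      ψ y x = ofAdd ((r : F) ^ (toAdd y).val * toAdd x) := by
    intro y x
    have hy : ((((toAdd y).val : ℕ)) : ZMod n) = toAdd y := by
      rw [ZMod.natCast_val, ZMod.cast_id]
    calc ψ y x = ψ (ofAdd ((((toAdd y).val : ℕ)) : ZMod n)) (ofAdd (toAdd x)) := by rw [hy]; rfl
      _ = ofAdd ((r : F) ^ (toAdd y).val * toAdd x) := hψnat _ _
  -- the conjugation formula
  have conj_formula : ∀ g m : G, g * m * g⁻¹ =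
      ⟨ofAdd (toAdd g.left + (r : F) ^ (toAdd g.right).val * toAdd m.left
          - (r : F) ^ (toAdd m.right).val * toAdd g.left), m.right⟩ := by
    intro g m
    ext
    · show g.left * ψ g.right m.left * ψ (g.right * m.right) (ψ g.right⁻¹ g.left⁻¹) = _
      rw [hψval g.right m.left, hψval g.right⁻¹ g.left⁻¹, hψval (g.right * m.right)]
      have hQR : (r : F) ^ (toAdd (g.right * m.right)).val
            * toAdd (ofAdd ((r : F) ^ (toAdd g.right⁻¹).val * toAdd g.left⁻¹))
          = -((r : F) ^ (toAdd m.right).val * toAdd g.left) := by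
        rw [toAdd_ofAdd]
        have h1 : toAdd (g.right * m.right) = toAdd g.right + toAdd m.right := rfl
        have h2 : toAdd g.right⁻¹ = -toAdd g.right := rfl
        have h3 : toAdd g.left⁻¹ = -toAdd g.left := rfl
        rw [h1, h2, h3, ← mul_assoc, ← hpowadd]
        have h4 : toAdd g.right + toAdd m.right + -toAdd g.right = toAdd m.right := by ring
        rw [h4]
        ring
      rw [hQR]
      rw [sub_eq_add_neg, ofAdd_add, ofAdd_add, ofAdd_toAdd]
      rfl
    · show g.right * m.right * g.right⁻¹ = m.right
      rw [mul_comm g.right m.right, mul_inv_cancel_right]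
  -- classifying map
  set Q := Fˣ ⧸ Subgroup.zpowers r with hQ
  set X := Option Q ⊕ {y : ZMod n // y ≠ 0} with hX
  set c : G → X := fun g =>
    if hy : toAdd g.right = 0 then
      Sum.inl (if hx : toAdd g.left = 0 then none else
        some (QuotientGroup.mk (Units.mk0 (toAdd g.left) hx)))
    else Sum.inr ⟨toAdd g.right, hy⟩ with hc
  have rpow_ne : ∀ y : ZMod n, y ≠ 0 → (r : F) ^ y.val ≠ 1 := by
    intro y hy hcontra
    have hu : r ^ y.val = 1 := Units.val_eq_one.mp (by push_cast; exact hcontra)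
    have hdvd := orderOf_dvd_of_pow_eq_one hu
    rw [hr] at hdvd
    have hvlt : y.val < n := ZMod.val_lt y
    have hvne : y.val ≠ 0 := by
      intro h0
      apply hy
      have h1 : ((y.val : ℕ) : ZMod n) = y := by rw [ZMod.natCast_val, ZMod.cast_id]
      rw [← h1, h0]; simp
    exact hvne (Nat.eq_zero_of_dvd_of_lt hdvd hvlt)
  have rpow_ne_zero : ∀ k : ℕ, (r : F) ^ k ≠ 0 := fun k => pow_ne_zero k r.ne_zero
  -- c is a complete conjugation invariant
  have key : ∀ g1 g2 : G, IsConj g1 g2 ↔ c g1 = c g2 := by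
    intro g1 g2
    constructor
    · intro hconj
      obtain ⟨u, hu'⟩ := isConj_iff.1 hconj
      rw [conj_formula] at hu'
      have h2r : toAdd g2.right = toAdd g1.right := by rw [← hu']
      have h2l : toAdd g2.left = toAdd u.left
          + (r : F) ^ (toAdd u.right).val * toAdd g1.left
          - (r : F) ^ (toAdd g1.right).val * toAdd u.left := by rw [← hu']; rfl
      simp only [hc]
      by_cases hy : toAdd g1.right = 0
      · have hy2 : toAdd g2.right = 0 := by rw [h2r]; exact hy
        rw [dif_pos hy, dif_pos hy2]
        have hx2 : toAdd g2.left = (r : F) ^ (toAdd u.right).val * toAdd g1.left := by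
          rw [h2l, hy, ZMod.val_zero, pow_zero]; ring
        congr 1
        by_cases hx : toAdd g1.left = 0
        · rw [dif_pos hx, dif_pos (by rw [hx2, hx, mul_zero])]
        · have hx' : toAdd g2.left ≠ 0 := by
            rw [hx2]; exact mul_ne_zero (rpow_ne_zero _) hx
          rw [dif_neg hx, dif_neg hx']
          congr 1
          rw [QuotientGroup.eq]
          have hval : Units.mk0 (toAdd g1.left) hx * r ^ (toAdd u.right).val
              = Units.mk0 (toAdd g2.left) hx' := by
            apply Units.ext
            simp only [Units.val_mul, Units.val_mk0, Units.val_pow_eq_pow_val]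
            rw [hx2]
            ring
          rw [← hval, inv_mul_cancel_left]
          exact Subgroup.pow_mem _ (Subgroup.mem_zpowers r) _
      · have hy2 : toAdd g2.right ≠ 0 := by rw [h2r]; exact hy
        rw [dif_neg hy, dif_neg hy2]
        exact congrArg Sum.inr (Subtype.ext h2r.symm)
    · intro hcc
      simp only [hc] at hcc
      by_cases hy1 : toAdd g1.right = 0
      · by_cases hy2 : toAdd g2.right = 0
        · rw [dif_pos hy1, dif_pos hy2] at hcc
          have hcc' := Sum.inl.inj hcc
          have hyy : g1.right = g2.right :=
            Multiplicative.toAdd.injective (by rw [hy1, hy2])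
          by_cases hx1 : toAdd g1.left = 0
          · by_cases hx2 : toAdd g2.left = 0
            · have : g1 = g2 := by
                ext
                · exact Multiplicative.toAdd.injective (by rw [hx1, hx2])
                · exact hyy
              rw [this]
            · rw [dif_pos hx1, dif_neg hx2] at hcc'
              exact absurd hcc' (by simp)
          · by_cases hx2 : toAdd g2.left = 0
            · rw [dif_neg hx1, dif_pos hx2] at hcc'
              exact absurd hcc' (by simp)
            · rw [dif_neg hx1, dif_neg hx2] at hcc'
              have hq := Option.some.inj hcc'
              rw [QuotientGroup.eq] at hq
              obtain ⟨k, hk⟩ := mem_powers_iff_mem_zpowers.2 hq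
              have hx2eq : toAdd g2.left = (r : F) ^ k * toAdd g1.left := by
                have hk' : r ^ k
                    = (Units.mk0 (toAdd g1.left) hx1)⁻¹ * Units.mk0 (toAdd g2.left) hx2 := hk
                have h5 : Units.mk0 (toAdd g1.left) hx1 * r ^ k
                    = Units.mk0 (toAdd g2.left) hx2 := by
                  rw [hk', mul_inv_cancel_left]
                have h6 := congrArg Units.val h5
                simp only [Units.val_mul, Units.val_mk0, Units.val_pow_eq_pow_val] at h6
                rw [← h6]; ring
              refine isConj_iff.2 ⟨⟨1, ofAdd ((k : ℕ) : ZMod n)⟩, ?_⟩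
              rw [conj_formula]
              ext
              · show ofAdd (toAdd (1 : Multiplicative F)
                    + (r : F) ^ (toAdd (ofAdd ((k : ℕ) : ZMod n))).val * toAdd g1.left
                    - (r : F) ^ (toAdd g1.right).val * toAdd (1 : Multiplicative F))
                    = g2.left
                conv_rhs => rw [← ofAdd_toAdd g2.left]
                congr 1
                rw [toAdd_one, toAdd_ofAdd, hx2eq, ZMod.val_natCast, hmodF]
                ring
              · show g1.right = g2.right
                exact hyy
        · rw [dif_pos hy1, dif_neg hy2] at hcc
          exact absurd hcc (by simp)
      · by_cases hy2 : toAdd g2.right = 0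
        · rw [dif_neg hy1, dif_pos hy2] at hcc
          exact absurd hcc (by simp)
        · rw [dif_neg hy1, dif_neg hy2] at hcc
          have hyy : toAdd g1.right = toAdd g2.right :=
            congrArg Subtype.val (Sum.inr.inj hcc)
          have hne : (1 : F) - (r : F) ^ (toAdd g1.right).val ≠ 0 :=
            sub_ne_zero.2 fun hcon => rpow_ne _ hy1 hcon.symm
          set a : F := (toAdd g2.left - toAdd g1.left) / (1 - (r : F) ^ (toAdd g1.right).val)
            with ha
          refine isConj_iff.2 ⟨⟨ofAdd a, 1⟩, ?_⟩
          rw [conj_formula]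
          ext
          · show ofAdd (toAdd (ofAdd a)
                + (r : F) ^ (toAdd (1 : Multiplicative (ZMod n))).val * toAdd g1.left
                - (r : F) ^ (toAdd g1.right).val * toAdd (ofAdd a)) = g2.left
            conv_rhs => rw [← ofAdd_toAdd g2.left]
            congr 1
            rw [toAdd_ofAdd, toAdd_one, ZMod.val_zero, pow_zero]
            have hmul : a * (1 - (r : F) ^ (toAdd g1.right).val)
                = toAdd g2.left - toAdd g1.left := by
              rw [ha, div_mul_cancel₀ _ hne]
            linear_combination hmul
          · show g1.right = g2.right
            exact Multiplicative.toAdd.injective hyy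
  -- the induced bijection on conjugacy classes
  have lift_ok : ∀ a b : G, IsConj a b → c a = c b := fun a b hab => (key a b).1 hab
  have hbij : Function.Bijective (Quotient.lift c lift_ok : ConjClasses G → X) := by
    constructor
    · intro q1 q2
      refine Quotient.inductionOn₂ q1 q2 ?_
      intro a b hab
      exact Quotient.sound ((key a b).2 hab)
    · rintro ((_ | q) | ⟨y, hy⟩)
      · refine ⟨Quotient.mk _ (1 : G), ?_⟩
        show c (1 : G) = Sum.inl none
        simp only [hc]
        rw [dif_pos (by simp), dif_pos (by simp)]
      · obtain ⟨u⟩ := q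
        refine ⟨Quotient.mk _ (⟨ofAdd (u : F), 1⟩ : G), ?_⟩
        show c _ = _
        simp only [hc]
        rw [dif_pos (show toAdd ((⟨ofAdd (u : F), 1⟩ : G)).right = 0 from rfl),
          dif_neg (show ¬ toAdd ((⟨ofAdd (u : F), 1⟩ : G)).left = 0 from u.ne_zero)]
        have hmk : Units.mk0 (toAdd ((⟨ofAdd (u : F), 1⟩ : G)).left) u.ne_zero = u :=
          Units.ext rfl
        rw [hmk]
        rfl
      · refine ⟨Quotient.mk _ (⟨1, ofAdd y⟩ : G), ?_⟩
        show c _ = _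
        simp only [hc]
        rw [dif_neg (show ¬ toAdd ((⟨1, ofAdd y⟩ : G)).right = 0 from hy)]
        rfl
  have hmain : Nat.card (ConjClasses (Multiplicative F ⋊[ψ] Multiplicative (ZMod n)))
      = Nat.card X := Nat.card_eq_of_bijective _ hbij
  rw [hmain]
  -- counting
  haveI : Finite Q := Quotient.finite _
  have h1 : Nat.card Fˣ = Nat.card Q * n := by
    rw [Subgroup.card_eq_card_quotient_mul_card_subgroup (Subgroup.zpowers r),
      Nat.card_zpowers, hr]
  have cardQ : Nat.card Q * n = p ^ h - 1 := by
    rw [← h1, Nat.card_eq_fintype_card, Fintype.card_units, hF]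
  have hdiv : (p ^ h - 1) / n = Nat.card Q := by
    rw [← cardQ, Nat.mul_div_cancel _ npos]
  have hcardX : Nat.card X = (Nat.card Q + 1) + (n - 1) := by
    rw [hX, Nat.card_sum]
    congr 1
    · rw [Nat.card_congr (Equiv.optionEquivSumPUnit Q : Option Q ≃ Q ⊕ PUnit.{1}), Nat.card_sum]
      simp
    · rw [Nat.card_eq_fintype_card, Fintype.card_subtype_compl, ZMod.card,
        Fintype.card_subtype_eq]
  rw [hcardX, hdiv]
  omega
end

section
/- Let p be a prime, h ≥ 1, let F_{p^h} be the field with p^h elements, let r ∈ F_{p^h}^× have multiplicative order n, and let G = F_{p^h} ⋊_r ℤ/nℤ. Then for every integer a, the number of elements g ∈ G with g^a = 1 equals gcd(a, p)^h + p^h·(gcd(a, n) − 1). -/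
open Multiplicative

open Finset

private lemma sdp_pow {N G : Type*} [CommGroup N] [Group G] (φ : G →* MulAut N)
    (g : N ⋊[φ] G) (k : ℕ) :
    g ^ k = ⟨∏ i ∈ Finset.range k, φ (g.right ^ i) g.left, g.right ^ k⟩ := by
  induction k with
  | zero =>
    ext
    · rw [pow_zero, Finset.prod_range_zero]; rfl
    · rw [pow_zero, pow_zero]; rfl
  | succ k ih =>
    rw [pow_succ, ih, Finset.prod_range_succ]
    ext
    · rw [SemidirectProduct.mul_left]
    · rw [SemidirectProduct.mul_right, pow_succ]

private lemma card_smul_zero (n k : ℕ) (hn : n ≠ 0) :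
    Nat.card {y : ZMod n // k • y = 0} = Nat.gcd n k := by
  haveI : NeZero n := ⟨hn⟩
  set f : ZMod n →+ ZMod n := AddMonoidHom.mulLeft (k : ZMod n) with hf
  have hker : ∀ y : ZMod n, y ∈ f.ker ↔ k • y = 0 := by
    intro y
    simp [hf, AddMonoidHom.mem_ker, nsmul_eq_mul]
  have hrange : f.range = AddSubgroup.zmultiples ((k : ℕ) : ZMod n) := by
    ext y
    simp only [AddMonoidHom.mem_range, AddSubgroup.mem_zmultiples_iff]
    constructor
    · rintro ⟨x, rfl⟩
      exact ⟨x.val, by simp [hf, zsmul_eq_mul, mul_comm]⟩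
    · rintro ⟨z, rfl⟩
      exact ⟨(z : ZMod n), by simp [hf, zsmul_eq_mul, mul_comm]⟩
  have hcr : Nat.card f.range = n / n.gcd k := by
    rw [hrange, Nat.card_zmultiples, ZMod.addOrderOf_coe k hn]
  have lag : Nat.card (ZMod n) = Nat.card (ZMod n ⧸ f.ker) * Nat.card f.ker :=
    AddSubgroup.card_eq_card_quotient_mul_card_addSubgroup f.ker
  have hq : Nat.card (ZMod n ⧸ f.ker) = n / n.gcd k := by
    rw [← hcr]
    exact Nat.card_congr (QuotientAddGroup.quotientKerEquivRange f).toEquiv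
  have hcard : Nat.card (ZMod n) = n := by simp [Nat.card_eq_fintype_card]
  have hdvd : n.gcd k ∣ n := Nat.gcd_dvd_left n k
  have hpos : 0 < n / n.gcd k :=
    Nat.div_pos (Nat.le_of_dvd (Nat.pos_of_ne_zero hn) hdvd)
      (Nat.gcd_pos_of_pos_left k (Nat.pos_of_ne_zero hn))
  have heq : Nat.card {y : ZMod n // k • y = 0} = Nat.card f.ker :=
    Nat.card_congr (Equiv.subtypeEquivRight (fun y => (hker y).symm))
  rw [heq]
  have h1 : (n / n.gcd k) * Nat.card f.ker = n := by rw [← hq, ← lag, hcard]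
  have h2 : n / n.gcd k * Nat.card f.ker = n / n.gcd k * n.gcd k := by
    rw [h1, Nat.div_mul_cancel hdvd]
  exact Nat.eq_of_mul_eq_mul_left hpos h2


/-- Let `p` be a prime, `h ≥ 1`, let `F` be the field with `p^h`
elements, let `r ∈ Fˣ` have multiplicative order `n`, and let `G = F ⋊_r ℤ/nℤ`.
Then for every integer `a`, the number of `g ∈ G` with `g^a = 1` equals
`gcd(a, p)^h + p^h · (gcd(a, n) - 1)`. -/
theorem card_solutions_pow_eq_one_semidirect_field
    (p h : ℕ) (hp : p.Prime) (hh : 1 ≤ h)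
    (F : Type) [Field F] [Fintype F] (hF : Fintype.card F = p ^ h)
    (n : ℕ) (r : Fˣ) (hr : orderOf r = n)
    (ψ : Multiplicative (ZMod n) →* MulAut (Multiplicative F))
    (hψ : ∀ x : F, ψ (ofAdd (1 : ZMod n)) (ofAdd x) = ofAdd ((r : F) * x))
    (a : ℤ) :
    Nat.card {g : Multiplicative F ⋊[ψ] Multiplicative (ZMod n) // g ^ a = 1}
      = Int.gcd a p ^ h + p ^ h * (Int.gcd a n - 1) := by
  classical
  -- characteristic
  haveI hcp : CharP F p := by
    obtain ⟨q, hq⟩ := CharP.exists F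
    haveI := hq
    have hqp : q.Prime := CharP.char_is_prime F q
    obtain ⟨m, -, hm⟩ := FiniteField.card F q
    have hpq : p = q := by
      have hd : p ∣ q ^ (m : ℕ) := by
        rw [← hm, hF]; exact dvd_pow_self p (by omega)
      exact (Nat.prime_dvd_prime_iff_eq hp hqp).mp (hp.dvd_of_dvd_pow hd)
    rwa [hpq]
  have hn0 : 0 < n := hr ▸ orderOf_pos r
  haveI : NeZero n := ⟨hn0.ne'⟩
  set G := Multiplicative F ⋊[ψ] Multiplicative (ZMod n) with hG
  set k := a.natAbs with hk
  -- reduce to natural exponent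
  have hza : ∀ g : G, g ^ a = 1 ↔ g ^ k = 1 := by
    intro g
    rcases Int.natAbs_eq a with h' | h' <;> rw [h']
    · rw [zpow_natCast]
    · rw [zpow_neg, inv_eq_one, zpow_natCast]
  -- action formula
  have key : ∀ (m : ℕ) (x : F), ψ (ofAdd ((m : ZMod n))) (ofAdd x)
      = ofAdd ((r : F) ^ m * x) := by
    intro m
    induction m with
    | zero => intro x; simp
    | succ m ih =>
      intro x
      have h1 : ((m + 1 : ℕ) : ZMod n) = (1 : ZMod n) + (m : ℕ) := by push_cast; ring
      rw [h1, ofAdd_add, map_mul, MulAut.mul_apply, ih, hψ, pow_succ]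
      congr 1
      ring
  have act : ∀ (y : ZMod n) (i : ℕ) (x : F),
      ψ ((ofAdd y) ^ i) (ofAdd x) = ofAdd ((r : F) ^ (i * y.val) * x) := by
    intro y i x
    have h1 : (ofAdd y) ^ i = ofAdd (((i * y.val : ℕ) : ZMod n)) := by
      rw [← ofAdd_nsmul]
      congr 1
      push_cast
      rw [ZMod.natCast_val, ZMod.cast_id]
      rw [nsmul_eq_mul]
    rw [h1, key]
  -- the power condition
  have cond : ∀ (x : F) (y : ZMod n),
      ((⟨ofAdd x, ofAdd y⟩ : G) ^ k = 1) ↔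
        ((∑ i ∈ Finset.range k, ((r : F) ^ y.val) ^ i) * x = 0 ∧ k • y = 0) := by
    intro x y
    rw [sdp_pow, SemidirectProduct.ext_iff]
    have hl : (∏ i ∈ Finset.range k,
        ψ (((⟨ofAdd x, ofAdd y⟩ : G).right) ^ i) ((⟨ofAdd x, ofAdd y⟩ : G).left))
        = ofAdd ((∑ i ∈ Finset.range k, ((r : F) ^ y.val) ^ i) * x) := by
      have : ∀ i ∈ Finset.range k,
          ψ ((ofAdd y) ^ i) (ofAdd x) = ofAdd (((r : F) ^ y.val) ^ i * x) := by
        intro i _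
        rw [act, ← pow_mul, mul_comm y.val i]
      rw [Finset.prod_congr rfl this, ← ofAdd_sum, ← Finset.sum_mul]
    constructor
    · rintro ⟨c1, c2⟩
      refine ⟨?_, ?_⟩
      · have h2 : ofAdd ((∑ i ∈ Finset.range k, ((r : F) ^ y.val) ^ i) * x)
            = (1 : Multiplicative F) := by rw [← hl]; exact c1
        exact ofAdd_eq_one.mp h2
      · have : (ofAdd y) ^ k = 1 := c2
        rw [← ofAdd_nsmul] at this
        simpa using ofAdd.injective (by simpa using this)
    · rintro ⟨c1, c2⟩
      constructor
      · show _ = (1 : G).left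
        rw [hl, c1]
        rfl
      · show _ = (1 : G).right
        rw [← ofAdd_nsmul, c2]
        rfl
  -- sigma decomposition
  have e2 : {g : G // g ^ a = 1} ≃
      Σ y : ZMod n, {x : F //
        (∑ i ∈ Finset.range k, ((r : F) ^ y.val) ^ i) * x = 0 ∧ k • y = 0} :=
    { toFun := fun g => ⟨toAdd g.1.right, toAdd g.1.left,
        (cond _ _).mp ((hza g.1).mp g.2)⟩
      invFun := fun s => ⟨⟨ofAdd s.2.1, ofAdd s.1⟩, (hza _).mpr ((cond _ _).mpr s.2.2)⟩
      left_inv := fun g => rfl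
      right_inv := fun s => rfl }
  rw [Nat.card_congr e2, Nat.card_eq_fintype_card, Fintype.card_sigma]
  have hnatc : ∀ y : ZMod n,
      Fintype.card {x : F //
        (∑ i ∈ Finset.range k, ((r : F) ^ y.val) ^ i) * x = 0 ∧ k • y = 0}
      = Nat.card {x : F //
        (∑ i ∈ Finset.range k, ((r : F) ^ y.val) ^ i) * x = 0 ∧ k • y = 0} :=
    fun y => (Nat.card_eq_fintype_card).symm
  rw [Finset.sum_congr rfl (fun y _ => hnatc y)]
  set c : ZMod n → ℕ := fun y => Nat.card {x : F //
      (∑ i ∈ Finset.range k, ((r : F) ^ y.val) ^ i) * x = 0 ∧ k • y = 0} with hc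
  -- value at 0
  have hc0 : c 0 = k.gcd p ^ h := by
    have hS : (∑ i ∈ Finset.range k, ((r : F) ^ (0 : ZMod n).val) ^ i) = (k : F) := by
      simp [ZMod.val_zero]
    have he : ∀ x : F,
        ((∑ i ∈ Finset.range k, ((r : F) ^ (0 : ZMod n).val) ^ i) * x = 0
          ∧ k • (0 : ZMod n) = 0) ↔ ((k : F) * x = 0) := by
      intro x; rw [hS]; simp
    show Nat.card _ = _
    rw [Nat.card_congr (Equiv.subtypeEquivRight he)]
    by_cases hpk : p ∣ k
    · have h0 : (k : F) = 0 := (CharP.cast_eq_zero_iff F p k).mpr hpk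
      have hall : ∀ x : F, (k : F) * x = 0 := fun x => by rw [h0, zero_mul]
      rw [Nat.card_congr (Equiv.subtypeUnivEquiv hall), Nat.card_eq_fintype_card, hF,
        Nat.gcd_eq_right hpk]
    · have h0 : (k : F) ≠ 0 := fun hc' => hpk ((CharP.cast_eq_zero_iff F p k).mp hc')
      have he2 : ∀ x : F, ((k : F) * x = 0) ↔ x = 0 := by
        intro x
        constructor
        · intro hx
          rcases mul_eq_zero.mp hx with h' | h'
          · exact absurd h' h0
          · exact h'
        · intro hx; rw [hx, mul_zero]
      rw [Nat.card_congr (Equiv.subtypeEquivRight he2), Nat.card_eq_fintype_card,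
        Fintype.card_subtype_eq]
      have hg1 : k.gcd p = 1 := Nat.Coprime.gcd_eq_one
        (Nat.Coprime.symm ((Nat.Prime.coprime_iff_not_dvd hp).mpr hpk))
      rw [hg1, one_pow]
  -- values away from 0
  have hcy : ∀ y : ZMod n, y ≠ 0 → c y = if k • y = 0 then p ^ h else 0 := by
    intro y hy
    by_cases hky : k • y = 0
    · rw [if_pos hky]
      have hs1 : (r : F) ^ y.val ≠ 1 := by
        intro hcon
        have hu : (r ^ y.val : Fˣ) = 1 := Units.ext (by push_cast; exact hcon)
        have hdvd : n ∣ y.val := by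
          have := orderOf_dvd_of_pow_eq_one hu
          rwa [hr] at this
        have hv0 : y.val ≠ 0 := fun h0 => hy ((ZMod.val_eq_zero y).mp h0)
        have hle := Nat.le_of_dvd (Nat.pos_of_ne_zero hv0) hdvd
        have hlt := ZMod.val_lt y
        omega
      have hsk : ((r : F) ^ y.val) ^ k = 1 := by
        have h1 : ((k * y.val : ℕ) : ZMod n) = 0 := by
          push_cast
          rw [ZMod.natCast_val, ZMod.cast_id, ← nsmul_eq_mul]
          exact hky
        have h2 : n ∣ k * y.val := (ZMod.natCast_eq_zero_iff _ _).mp h1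
        have h3 : (r ^ (k * y.val) : Fˣ) = 1 :=
          orderOf_dvd_iff_pow_eq_one.mp (by rw [hr]; exact h2)
        have h4 : ((r : F)) ^ (k * y.val) = 1 := by
          have := congrArg (Units.val) h3
          push_cast at this
          exact this
        rw [← pow_mul, mul_comm y.val k, h4]
      have hSy : (∑ i ∈ Finset.range k, ((r : F) ^ y.val) ^ i) = 0 := by
        have hg := geom_sum_mul ((r : F) ^ y.val) k
        rw [hsk, sub_self] at hg
        rcases mul_eq_zero.mp hg with h' | h'
        · exact h'
        · exact absurd (sub_eq_zero.mp h') hs1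
      have hall : ∀ x : F,
          (∑ i ∈ Finset.range k, ((r : F) ^ y.val) ^ i) * x = 0 ∧ k • y = 0 :=
        fun x => ⟨by rw [hSy, zero_mul], hky⟩
      show Nat.card _ = _
      rw [Nat.card_congr (Equiv.subtypeUnivEquiv hall), Nat.card_eq_fintype_card, hF]
    · rw [if_neg hky]
      show Nat.card _ = _
      have : IsEmpty {x : F //
          (∑ i ∈ Finset.range k, ((r : F) ^ y.val) ^ i) * x = 0 ∧ k • y = 0} :=
        ⟨fun x => hky x.2.2⟩
      exact Nat.card_of_isEmpty
  -- assemble the sum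
  rw [← Finset.sum_erase_add Finset.univ c (Finset.mem_univ (0 : ZMod n))]
  have hsum : (∑ y ∈ Finset.univ.erase (0 : ZMod n), c y) = p ^ h * (k.gcd n - 1) := by
    rw [Finset.sum_congr rfl (fun y hy => hcy y (Finset.ne_of_mem_erase hy))]
    rw [← Finset.sum_filter]
    rw [Finset.sum_const, Finset.filter_erase]
    have hmem : (0 : ZMod n) ∈ Finset.univ.filter (fun y : ZMod n => k • y = 0) := by
      simp
    rw [Finset.card_erase_of_mem hmem]
    have hfil : #(Finset.univ.filter (fun y : ZMod n => k • y = 0)) = k.gcd n := by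
      rw [← Fintype.card_subtype, ← Nat.card_eq_fintype_card,
        card_smul_zero n k hn0.ne', Nat.gcd_comm]
    rw [hfil, smul_eq_mul, mul_comm]
  rw [hsum, hc0]
  have hgp : Int.gcd a p = k.gcd p := by simp [Int.gcd, hk]
  have hgn : Int.gcd a n = k.gcd n := by simp [Int.gcd, hk]
  rw [hgp, hgn]
  exact Nat.add_comm _ _
end

section
/- Let p be a prime, h ≥ 1, let F_{p^h} be the field with p^h elements, let r ∈ F_{p^h}^× have multiplicative order n, let G = F_{p^h} ⋊_r ℤ/nℤ, and for an integer t let χ_t : G → ℂ^× be the group homomorphism sending (x, y) to ζ_n^{t·y}. Then for all integers a and b, the sum Σ_{g ∈ G, g^a = 1} χ_t(g^{−b}) equals gcd(a, p)^h − p^h + p^h·gcd(a, n) if gcd(a,n) divides t·b, and equals gcd(a, p)^h − p^h otherwise. -/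
open Multiplicative

/-- Let `p` be a prime, `h ≥ 1`, let `F` be the field with `p^h`
elements, let `r ∈ Fˣ` have multiplicative order `n`, let `G = F ⋊_r ℤ/nℤ`, and for an
integer `t` let `χ_t : G → ℂˣ` be the homomorphism sending `(x, y)` to `ζ_n^{t·y}`.
Then for all integers `a, b`, the sum `Σ_{g ∈ G, g^a = 1} χ_t(g^{-b})` equals
`gcd(a,p)^h - p^h + p^h·gcd(a,n)` if `gcd(a,n) ∣ t·b`, and `gcd(a,p)^h - p^h`
otherwise. -/
theorem character_sum_semidirect_field
    (p h : ℕ) (hp : p.Prime) (hh : 1 ≤ h)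
    (F : Type) [Field F] [Fintype F] (hF : Fintype.card F = p ^ h)
    (n : ℕ) (r : Fˣ) (hr : orderOf r = n)
    (ψ : Multiplicative (ZMod n) →* MulAut (Multiplicative F))
    (hψ : ∀ x : F, ψ (ofAdd (1 : ZMod n)) (ofAdd x) = ofAdd ((r : F) * x))
    (t : ℤ)
    (χ : (Multiplicative F ⋊[ψ] Multiplicative (ZMod n)) →* ℂˣ)
    (hχ : ∀ g : Multiplicative F ⋊[ψ] Multiplicative (ZMod n),
      (χ g : ℂ) = Complex.exp (2 * Real.pi * Complex.I * (t * ((toAdd g.right).val : ℤ)) / n))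
    (a b : ℤ) :
    (∑ᶠ g ∈ {g : Multiplicative F ⋊[ψ] Multiplicative (ZMod n) | g ^ a = 1},
        (χ (g ^ (-b)) : ℂ))
      = if (Int.gcd a n : ℤ) ∣ t * b then
          (Int.gcd a p : ℂ) ^ h - (p : ℂ) ^ h + (p : ℂ) ^ h * (Int.gcd a n : ℂ)
        else (Int.gcd a p : ℂ) ^ h - (p : ℂ) ^ h := by
  classical
  have hn0 : 0 < n := hr ▸ orderOf_pos r
  haveI : NeZero n := ⟨hn0.ne'⟩
  -- characteristic of F is p
  haveI hchar : CharP F p := by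
    obtain ⟨k, hqp, hcard⟩ := FiniteField.card F (ringChar F)
    have hq : ringChar F = p := by
      have h1 : p ∣ ringChar F := by
        have : p ∣ ringChar F ^ (k : ℕ) := by
          rw [← hcard, hF]; exact dvd_pow_self p (by omega)
        exact hp.dvd_of_dvd_pow this
      exact ((Nat.prime_dvd_prime_iff_eq hp hqp).mp h1).symm
    exact hq ▸ ringChar.charP F
  set d : ℕ := Int.gcd a n with hd
  have hdn : d ∣ n := Int.natCast_dvd_natCast.mp (Int.gcd_dvd_right a n)
  have hd0 : 0 < d := Nat.pos_of_ne_zero (by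
    intro h0
    exact hn0.ne' (Nat.eq_zero_of_zero_dvd (h0 ▸ hdn)))
  set m : ℕ := n / d with hm
  have hdm : d * m = n := Nat.mul_div_cancel' hdn

  have hm0 : 0 < m := by
    rcases Nat.eq_zero_or_pos m with h0 | h0
    · rw [h0, mul_zero] at hdm; omega
    · exact h0
  -- the primitive root
  set ζ : ℂ := Complex.exp (2 * Real.pi * Complex.I / n) with hζdef
  have hζ : IsPrimitiveRoot ζ n := Complex.isPrimitiveRoot_exp n hn0.ne'
  set E : ℤ → ℂ := fun j => ζ ^ j with hE
  have hexpE : ∀ j : ℤ, Complex.exp (2 * Real.pi * Complex.I * (j : ℂ) / n) = E j := by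
    intro j
    rw [hE]; dsimp only
    rw [hζdef, ← Complex.exp_int_mul]
    congr 1
    field_simp
  have hEcong : ∀ j k : ℤ, ((j : ZMod n) = (k : ZMod n)) → E j = E k := by
    intro j k hjk
    have hdvd : (n : ℤ) ∣ j - k := by
      have := (ZMod.intCast_eq_intCast_iff j k n).mp hjk
      exact Int.ModEq.dvd this.symm
    have h1 : ζ ^ (j - k) = 1 := (hζ.zpow_eq_one_iff_dvd _).mpr hdvd
    have : ζ ^ j = ζ ^ k * ζ ^ (j - k) := by
      rw [← zpow_add₀ (hζ.ne_zero hn0.ne')]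
      congr 1; ring
    simp [hE, this, h1]
  -- value of chi on powers
  have hval : ∀ g : Multiplicative F ⋊[ψ] Multiplicative (ZMod n),
      (χ (g ^ (-b)) : ℂ) = E (-(t * b) * ((toAdd g.right).val : ℤ)) := by
    intro g
    rw [hχ]
    have hright : (g ^ (-b)).right = g.right ^ (-b) := by
      have := map_zpow (SemidirectProduct.rightHom
        (N := Multiplicative F) (G := Multiplicative (ZMod n)) (φ := ψ)) g (-b)
      simpa [SemidirectProduct.rightHom] using this
    rw [hright]
    have h2 : (2 * (Real.pi : ℂ) * Complex.I * ((t : ℂ) * (((toAdd (g.right ^ (-b))).val : ℤ) : ℂ)) / n)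
        = 2 * (Real.pi : ℂ) * Complex.I * (((t * ((toAdd (g.right ^ (-b))).val : ℤ)) : ℤ) : ℂ) / n := by
      push_cast; ring
    rw [h2, hexpE]
    apply hEcong
    push_cast
    rw [toAdd_zpow]
    rw [ZMod.natCast_val, ZMod.natCast_val]
    simp only [ZMod.intCast_cast, ZMod.cast_id]
    rw [zsmul_eq_mul]
    push_cast
    ring
  -- action formula
  have haction : ∀ (k : ℕ) (w : F),
      ψ (ofAdd ((k : ZMod n))) (ofAdd w) = ofAdd ((r : F) ^ k * w) := by
    intro k
    induction k with
    | zero => intro w; simp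
    | succ k ih =>
      intro w
      have : ((k + 1 : ℕ) : ZMod n) = (k : ZMod n) + 1 := by push_cast; ring
      rw [this, ofAdd_add, map_mul]
      simp only [MulAut.mul_apply]
      rw [hψ w, ih ((r : F) * w)]
      congr 1
      ring
  -- r ^ y.val ≠ 1 for y ≠ 0
  have hrpow : ∀ y : ZMod n, y ≠ 0 → ((r : F) ^ y.val ≠ 1) := by
    intro y hy hcontr
    have hu : r ^ y.val = 1 := by
      apply Units.ext
      rw [Units.val_pow_eq_pow_val]
      simpa using hcontr
    have := orderOf_dvd_of_pow_eq_one hu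
    rw [hr] at this
    have hlt : y.val < n := ZMod.val_lt y
    have h0 : y.val = 0 := Nat.eq_zero_of_dvd_of_lt this hlt
    exact hy ((ZMod.val_eq_zero y).mp h0)
  -- conjugation identity
  have hconj : ∀ (w x : Multiplicative F) (y : Multiplicative (ZMod n)),
      SemidirectProduct.inl w * SemidirectProduct.inr y * (SemidirectProduct.inl w)⁻¹
        = (⟨w * ψ y w⁻¹, y⟩ : Multiplicative F ⋊[ψ] Multiplicative (ZMod n)) := by
    intro w x y
    rw [SemidirectProduct.mk_eq_inl_mul_inr, map_mul, SemidirectProduct.inl_aut, ← map_inv]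
    group
    have h9 : SemidirectProduct.inr (φ := ψ) (y ^ (-1 : ℤ)) * SemidirectProduct.inr y = 1 := by
      rw [← map_mul]; simp
    rw [mul_assoc _ (SemidirectProduct.inr (y ^ (-1 : ℤ))), h9, mul_one]
  -- power condition for y ≠ 1
  have hstep : ∀ (x : Multiplicative F) (y : Multiplicative (ZMod n)), toAdd y ≠ 0 →
      ((⟨x, y⟩ : Multiplicative F ⋊[ψ] Multiplicative (ZMod n)) ^ a = 1 ↔ a • (toAdd y) = 0) := by
    intro x y hy
    have hr1 : (1 : F) - (r : F) ^ (toAdd y).val ≠ 0 :=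
      sub_ne_zero.mpr (Ne.symm (hrpow (toAdd y) hy))
    set c : F := toAdd x / (1 - (r : F) ^ (toAdd y).val) with hcdef
    have hc : c * (1 - (r : F) ^ (toAdd y).val) = toAdd x := div_mul_cancel₀ _ hr1
    have hyrep : ofAdd ((((toAdd y).val : ℕ) : ZMod n)) = y := by
      rw [ZMod.natCast_rightInverse (toAdd y)]
      exact ofAdd_toAdd (toAdd y) ▸ rfl
    have hψy : ψ y (ofAdd c)⁻¹ = ofAdd ((r : F) ^ (toAdd y).val * (-c)) := by
      conv_lhs => rw [← hyrep]
      rw [← ofAdd_neg]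
      exact haction _ _
    have hmk : (⟨x, y⟩ : Multiplicative F ⋊[ψ] Multiplicative (ZMod n))
        = SemidirectProduct.inl (ofAdd c) * SemidirectProduct.inr y
            * (SemidirectProduct.inl (ofAdd c))⁻¹ := by
      rw [hconj (ofAdd c) x y]
      congr 1
      rw [hψy]
      have : ofAdd c * ofAdd ((r : F) ^ (toAdd y).val * (-c)) = ofAdd (toAdd x) := by
        rw [← ofAdd_add]
        congr 1
        rw [← hc]; ring
      rw [this, ofAdd_toAdd]
    rw [hmk, conj_zpow]
    have hiff1 : SemidirectProduct.inl (φ := ψ) (ofAdd c) * (SemidirectProduct.inr (φ := ψ) y) ^ a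
            * (SemidirectProduct.inl (φ := ψ) (ofAdd c))⁻¹ = 1
          ↔ (SemidirectProduct.inr y : Multiplicative F ⋊[ψ] Multiplicative (ZMod n)) ^ a = 1 := by
      constructor
      · intro h1
        have h2 := congrArg (fun z => (SemidirectProduct.inl (ofAdd c))⁻¹ * z
          * SemidirectProduct.inl (ofAdd c)) h1
        simpa [mul_assoc] using h2
      · intro h1; rw [h1]; simp
    rw [hiff1, ← map_zpow,
      show (1 : Multiplicative F ⋊[ψ] Multiplicative (ZMod n)) = SemidirectProduct.inr 1 by simp,
      SemidirectProduct.inr_inj]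
    constructor
    · intro h1
      have := congrArg toAdd h1
      rwa [toAdd_zpow, toAdd_one] at this
    · intro h1
      apply Multiplicative.toAdd.injective
      rwa [toAdd_zpow, toAdd_one]
  -- power condition for y = 1
  have hstep0 : ∀ x : Multiplicative F,
      ((⟨x, (1 : Multiplicative (ZMod n))⟩ : Multiplicative F ⋊[ψ] Multiplicative (ZMod n)) ^ a = 1
        ↔ (a : F) * toAdd x = 0) := by
    intro x
    have hxl : (⟨x, 1⟩ : Multiplicative F ⋊[ψ] Multiplicative (ZMod n))
        = SemidirectProduct.inl x := rfl
    rw [hxl, ← map_zpow,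
      show (1 : Multiplicative F ⋊[ψ] Multiplicative (ZMod n)) = SemidirectProduct.inl 1 by simp,
      SemidirectProduct.inl_inj]
    constructor
    · intro h1
      have := congrArg toAdd h1
      rw [toAdd_zpow, toAdd_one, zsmul_eq_mul] at this
      exact this
    · intro h1
      apply Multiplicative.toAdd.injective
      rw [toAdd_zpow, toAdd_one, zsmul_eq_mul]
      exact h1
  -- set up the finite sum over the product
  let e : Multiplicative (ZMod n) × Multiplicative F ≃
      (Multiplicative F ⋊[ψ] Multiplicative (ZMod n)) :=
    { toFun := fun q => ⟨q.2, q.1⟩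
      invFun := fun g => (g.right, g.left)
      left_inv := fun q => rfl
      right_inv := fun g => rfl }
  haveI : Fintype (Multiplicative F ⋊[ψ] Multiplicative (ZMod n)) := Fintype.ofEquiv _ e
  have hsets : {g : Multiplicative F ⋊[ψ] Multiplicative (ZMod n) | g ^ a = 1}
      = ↑(Finset.univ.filter
          (fun g : Multiplicative F ⋊[ψ] Multiplicative (ZMod n) => g ^ a = 1)) := by
    ext g; simp
  rw [hsets, finsum_mem_coe_finset, Finset.sum_filter,
    ← Equiv.sum_comp e (fun g => if g ^ a = 1 then (χ (g ^ (-b)) : ℂ) else 0),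
    Fintype.sum_prod_type]
  have he : ∀ (y : Multiplicative (ZMod n)) (x : Multiplicative F),
      e (y, x) = (⟨x, y⟩ : Multiplicative F ⋊[ψ] Multiplicative (ZMod n)) := fun _ _ => rfl
  simp only [he]
  -- inner sums
  have hcardM : Fintype.card (Multiplicative F) = p ^ h := by
    rw [Fintype.card_multiplicative, hF]
  have hinner1 : ∀ y : Multiplicative (ZMod n), toAdd y ≠ 0 →
      (∑ x : Multiplicative F,
          if (⟨x, y⟩ : Multiplicative F ⋊[ψ] Multiplicative (ZMod n)) ^ a = 1
          then (χ ((⟨x, y⟩ : Multiplicative F ⋊[ψ] Multiplicative (ZMod n)) ^ (-b)) : ℂ) else 0)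
        = if a • toAdd y = 0 then (p : ℂ) ^ h * E (-(t * b) * ((toAdd y).val : ℤ)) else 0 := by
    intro y hy
    by_cases hay : a • toAdd y = 0
    · rw [if_pos hay]
      have hterm : ∀ x : Multiplicative F,
          (if (⟨x, y⟩ : Multiplicative F ⋊[ψ] Multiplicative (ZMod n)) ^ a = 1
            then (χ ((⟨x, y⟩ : Multiplicative F ⋊[ψ] Multiplicative (ZMod n)) ^ (-b)) : ℂ) else 0)
          = E (-(t * b) * ((toAdd y).val : ℤ)) := by
        intro x
        rw [if_pos ((hstep x y hy).mpr hay), hval]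
      rw [Finset.sum_congr rfl (fun x _ => hterm x), Finset.sum_const, Finset.card_univ, hcardM]
      simp [nsmul_eq_mul]
    · rw [if_neg hay]
      apply Finset.sum_eq_zero
      intro x _
      rw [if_neg (fun hc => hay ((hstep x y hy).mp hc))]
  have hinner0 : (∑ x : Multiplicative F,
      if (⟨x, (1 : Multiplicative (ZMod n))⟩ : Multiplicative F ⋊[ψ] Multiplicative (ZMod n)) ^ a = 1
      then (χ ((⟨x, (1 : Multiplicative (ZMod n))⟩ :
        Multiplicative F ⋊[ψ] Multiplicative (ZMod n)) ^ (-b)) : ℂ) else 0)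
      = (Int.gcd a p : ℂ) ^ h := by
    have hv1 : ∀ x : Multiplicative F,
        (χ ((⟨x, (1 : Multiplicative (ZMod n))⟩ :
          Multiplicative F ⋊[ψ] Multiplicative (ZMod n)) ^ (-b)) : ℂ) = 1 := by
      intro x
      rw [hval]
      have h0 : toAdd ((⟨x, (1 : Multiplicative (ZMod n))⟩ :
          Multiplicative F ⋊[ψ] Multiplicative (ZMod n)).right) = 0 := rfl
      rw [h0]
      simp [hE]
    have hterm : ∀ x : Multiplicative F,
        (if (⟨x, (1 : Multiplicative (ZMod n))⟩ :
            Multiplicative F ⋊[ψ] Multiplicative (ZMod n)) ^ a = 1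
          then (χ ((⟨x, (1 : Multiplicative (ZMod n))⟩ :
            Multiplicative F ⋊[ψ] Multiplicative (ZMod n)) ^ (-b)) : ℂ) else 0)
        = (if (a : F) * toAdd x = 0 then (1 : ℂ) else 0) := by
      intro x
      by_cases hc : (a : F) * toAdd x = 0
      · rw [if_pos ((hstep0 x).mpr hc), hv1, if_pos hc]
      · rw [if_neg (fun hh' => hc ((hstep0 x).mp hh')), if_neg hc]
    rw [Finset.sum_congr rfl (fun x _ => hterm x)]
    by_cases hpa : (p : ℤ) ∣ a
    · have haF : (a : F) = 0 := (CharP.intCast_eq_zero_iff F p a).mpr hpa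
      have hgcd : Int.gcd a p = p := by
        have h1 : p ∣ a.natAbs := by
          have := Int.natAbs_dvd_natAbs.mpr hpa
          simpa using this
        have : Int.gcd a p = Nat.gcd a.natAbs p := by simp [Int.gcd]
        rw [this, Nat.gcd_eq_right h1]
      rw [hgcd]
      have hall : ∀ x : Multiplicative F, (if (a : F) * toAdd x = 0 then (1:ℂ) else 0) = 1 := by
        intro x; rw [if_pos (by rw [haF, zero_mul])]
      rw [Finset.sum_congr rfl (fun x _ => hall x), Finset.sum_const, Finset.card_univ, hcardM,
        nsmul_eq_mul, mul_one]
      push_cast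
      ring
    · have haF : (a : F) ≠ 0 := fun hc => hpa ((CharP.intCast_eq_zero_iff F p a).mp hc)
      have hgcd : Int.gcd a p = 1 := by
        have h1 : ¬ p ∣ a.natAbs := by
          intro hc
          apply hpa
          have h9 : ((p : ℤ)).natAbs ∣ a.natAbs := by simpa using hc
          exact Int.natAbs_dvd_natAbs.mp h9
        have h2 : Nat.Coprime p a.natAbs := (Nat.Prime.coprime_iff_not_dvd hp).mpr h1
        have : Int.gcd a p = Nat.gcd a.natAbs p := by simp [Int.gcd]
        rw [this]
        exact h2.symm
      rw [hgcd]
      have hterm2 : ∀ x : Multiplicative F,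
          (if (a : F) * toAdd x = 0 then (1 : ℂ) else 0) = (if x = 1 then (1:ℂ) else 0) := by
        intro x
        have : ((a : F) * toAdd x = 0) ↔ x = 1 := by
          rw [mul_eq_zero]
          constructor
          · rintro (hc | hc)
            · exact absurd hc haF
            · exact toAdd_eq_zero.mp hc
          · intro hc; right; exact toAdd_eq_zero.mpr hc
        by_cases hc : x = 1
        · rw [if_pos (this.mpr hc), if_pos hc]
        · rw [if_neg (fun hh' => hc (this.mp hh')), if_neg hc]
      rw [Finset.sum_congr rfl (fun x _ => hterm2 x), Finset.sum_ite_eq' Finset.univ 1 (fun _ => (1:ℂ))]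
      simp
  -- the character sum over ZMod n
  set gf : Multiplicative (ZMod n) → ℂ :=
    fun y => if a • toAdd y = 0 then E (-(t * b) * ((toAdd y).val : ℤ)) else 0 with hgf
  have hgf1 : gf 1 = 1 := by
    simp [hgf, hE]
  have hcond : ∀ z : ZMod n, (a • z = 0) ↔ (n : ℤ) ∣ a * (z.val : ℤ) := by
    intro z
    have hz : ((a * (z.val : ℤ) : ℤ) : ZMod n) = a • z := by
      push_cast
      rw [zsmul_eq_mul]
      congr 1
      exact ZMod.natCast_rightInverse z
    rw [← ZMod.intCast_zmod_eq_zero_iff_dvd, hz]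
  have hn' : (n : ℤ) = (d : ℤ) * m := by exact_mod_cast hdm.symm
  have hvalmk : ∀ k : ℕ, k < d → (((m * k : ℕ) : ZMod n)).val = m * k := by
    intro k hk
    apply ZMod.val_natCast_of_lt
    calc m * k < m * d := (Nat.mul_lt_mul_left hm0).mpr hk
    _ = n := by rw [mul_comm]; exact hdm
  have hmem1 : ∀ k : ℕ, k < d → a • (((m * k : ℕ) : ZMod n)) = 0 := by
    intro k hk
    rw [hcond, hvalmk k hk]
    have hda : (d : ℤ) ∣ a := Int.gcd_dvd_left a n
    obtain ⟨a', ha'⟩ := hda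
    refine ⟨a' * k, ?_⟩
    rw [ha']
    conv_rhs => rw [hn']
    push_cast
    ring
  have hmdvd : ∀ z : ZMod n, a • z = 0 → m ∣ z.val := by
    intro z hz
    have h1 : (n : ℤ) ∣ a * (z.val : ℤ) := (hcond z).mp hz
    have h2 : n ∣ a.natAbs * z.val := by
      have h9 := Int.natAbs_dvd_natAbs.mpr h1
      rwa [Int.natAbs_mul, Int.natAbs_natCast, Int.natAbs_natCast] at h9
    have h3 : n ∣ d * z.val := by
      have hg : Nat.gcd (a.natAbs * z.val) (n * z.val) = d * z.val := by
        rw [Nat.gcd_mul_right]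
        have h8 : a.natAbs.gcd n = d := by rw [hd]; simp [Int.gcd]
        rw [h8]
      exact hg ▸ Nat.dvd_gcd h2 (dvd_mul_right n z.val)
    have h3' : d * m ∣ d * z.val := by rw [hdm]; exact h3
    exact (mul_dvd_mul_iff_left (hd0.ne' : d ≠ 0)).mp h3' 
  have hSg : (∑ y : Multiplicative (ZMod n), gf y)
      = if (d : ℤ) ∣ t * b then (d : ℂ) else 0 := by
    rw [← Equiv.sum_comp (Multiplicative.ofAdd (α := ZMod n)) gf]
    have hpt : ∀ z : ZMod n, gf (ofAdd z)
        = if a • z = 0 then E (-(t * b) * (z.val : ℤ)) else 0 := by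
      intro z; simp [hgf]
    rw [Finset.sum_congr rfl (fun z _ => hpt z), ← Finset.sum_filter]
    have hbij : (∑ z ∈ Finset.univ.filter (fun z : ZMod n => a • z = 0),
          E (-(t * b) * (z.val : ℤ)))
        = ∑ k ∈ Finset.range d, (E (-(t * b) * (m : ℤ))) ^ k := by
      refine Finset.sum_nbij' (fun z : ZMod n => z.val / m)
        (fun k : ℕ => ((m * k : ℕ) : ZMod n)) ?_ ?_ ?_ ?_ ?_
      · intro z hz
        rw [Finset.mem_range]
        rw [Nat.div_lt_iff_lt_mul hm0]
        calc z.val < n := ZMod.val_lt z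
        _ = d * m := hdm.symm
      · intro k hk
        rw [Finset.mem_filter]
        exact ⟨Finset.mem_univ _, hmem1 k (Finset.mem_range.mp hk)⟩
      · intro z hz
        have hzc := (Finset.mem_filter.mp hz).2
        have h9 : m * (z.val / m) = z.val := Nat.mul_div_cancel' (hmdvd z hzc)
        show ((m * (z.val / m) : ℕ) : ZMod n) = z
        rw [h9]
        exact ZMod.natCast_rightInverse z
      · intro k hk
        show (((m * k : ℕ) : ZMod n)).val / m = k
        rw [hvalmk k (Finset.mem_range.mp hk)]
        exact Nat.mul_div_cancel_left k hm0
      · intro z hz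
        have hzc := (Finset.mem_filter.mp hz).2
        obtain ⟨q, hq⟩ := hmdvd z hzc
        show E (-(t * b) * ((z.val : ℕ) : ℤ)) = E (-(t * b) * (m : ℤ)) ^ (z.val / m)
        rw [hq, Nat.mul_div_cancel_left q hm0]
        rw [hE]; dsimp only
        rw [← zpow_natCast (ζ ^ (-(t * b) * (m : ℤ))) q, ← zpow_mul]
        congr 1
        push_cast
        ring
    rw [hbij]
    by_cases hdvd : (d : ℤ) ∣ t * b
    · rw [if_pos hdvd]
      obtain ⟨s, hs⟩ := hdvd
      have hw : E (-(t * b) * (m : ℤ)) = 1 := by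
        rw [hE]; dsimp only
        apply (hζ.zpow_eq_one_iff_dvd _).mpr
        refine ⟨-s, ?_⟩
        rw [hs, hn']
        ring
      rw [hw]
      simp
    · rw [if_neg hdvd]
      have hw1 : E (-(t * b) * (m : ℤ)) ≠ 1 := by
        intro hc
        apply hdvd
        rw [hE] at hc
        have h9 := (hζ.zpow_eq_one_iff_dvd _).mp hc
        rw [hn'] at h9
        have h10 : ((d : ℤ) * m) ∣ (t * b) * m := by
          have := (dvd_neg).mpr h9
          simpa [neg_mul] using this
        have hmz : (m : ℤ) ≠ 0 := by exact_mod_cast hm0.ne'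
        exact (mul_dvd_mul_iff_right hmz).mp h10
      have hwd : (E (-(t * b) * (m : ℤ))) ^ d = 1 := by
        rw [hE]; dsimp only
        rw [← zpow_natCast, ← zpow_mul]
        apply (hζ.zpow_eq_one_iff_dvd _).mpr
        refine ⟨-(t * b), ?_⟩
        rw [hn']
        ring
      rw [geom_sum_eq hw1, hwd]
      simp
  -- assemble
  have h1t : ∀ y : Multiplicative (ZMod n), y ≠ 1 → toAdd y ≠ 0 := by
    intro y hy hc
    exact hy (toAdd_eq_zero.mp hc)
  rw [← Finset.add_sum_erase _ _ (Finset.mem_univ (1 : Multiplicative (ZMod n))), hinner0]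
  have herase : ∀ y ∈ Finset.univ.erase (1 : Multiplicative (ZMod n)),
      (∑ x : Multiplicative F,
          if (⟨x, y⟩ : Multiplicative F ⋊[ψ] Multiplicative (ZMod n)) ^ a = 1
          then (χ ((⟨x, y⟩ : Multiplicative F ⋊[ψ] Multiplicative (ZMod n)) ^ (-b)) : ℂ) else 0)
        = (p : ℂ) ^ h * gf y := by
    intro y hy
    rw [hinner1 y (h1t y (Finset.ne_of_mem_erase hy)), hgf]
    dsimp only
    rw [mul_ite, mul_zero]
  rw [Finset.sum_congr rfl herase, ← Finset.mul_sum]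
  have herase_sum : (∑ y ∈ Finset.univ.erase (1 : Multiplicative (ZMod n)), gf y)
      = (∑ y : Multiplicative (ZMod n), gf y) - gf 1 := by
    rw [← Finset.add_sum_erase _ gf (Finset.mem_univ (1 : Multiplicative (ZMod n)))]
    ring
  rw [herase_sum, hgf1, hSg]
  by_cases hdvd : (d : ℤ) ∣ t * b
  · rw [if_pos hdvd, if_pos hdvd]
    ring
  · rw [if_neg hdvd, if_neg hdvd]
    ring
end
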